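/- arXiv:math/0606272 — 4 statements merged into one kernel-verified Lean document; each statement's English description precedes it below -/
import Mathlib

section
/- Let V be a gl_m-module. Then the following defines an action of the degenerate affine Hecke algebra H_N on V ⊗ (C^m)^{⊗N}: the symmetric group S_N ⊂ H_N acts by permuting the N tensor factors C^m, and the element y_p = x_p − σ_{1p} − ... − σ_{p−1,p} acts as Σ_{a,b=1}^m E_{ba} ⊗ E_{ab}^{(p)}, where E_{ab}^{(p)} applies the matrix unit E_{ab} in the p-th tensor factor. Moreover, this H_N-action commutes with the diagonal gl_m-action. -/
open Equiv (swap)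

/-- Defining relations of the degenerate affine Hecke algebra `H_N`:
it is generated by the symmetric group (generators `Sum.inl σ`) and by
pairwise commuting elements `x_1, …, x_N` (generators `Sum.inr p`), with
the cross relations `σ_p x_q = x_q σ_p` for `q ≠ p, p+1` and
`σ_p x_p = x_{p+1} σ_p - 1`, where `σ_p` is the transposition `(p, p+1)`. -/
inductive HeckeRel (N : ℕ) :
    FreeAlgebra ℂ (Equiv.Perm (Fin N) ⊕ Fin N) →
    FreeAlgebra ℂ (Equiv.Perm (Fin N) ⊕ Fin N) → Prop
  | group_one :
      HeckeRel N (FreeAlgebra.ι ℂ (Sum.inl 1)) 1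
  | group_mul (σ τ : Equiv.Perm (Fin N)) :
      HeckeRel N (FreeAlgebra.ι ℂ (Sum.inl σ) * FreeAlgebra.ι ℂ (Sum.inl τ))
        (FreeAlgebra.ι ℂ (Sum.inl (σ * τ)))
  | x_comm (p q : Fin N) :
      HeckeRel N (FreeAlgebra.ι ℂ (Sum.inr p) * FreeAlgebra.ι ℂ (Sum.inr q))
        (FreeAlgebra.ι ℂ (Sum.inr q) * FreeAlgebra.ι ℂ (Sum.inr p))
  | cross1 (p : Fin N) (hp : (p : ℕ) + 1 < N) (q : Fin N)
      (h1 : q ≠ p) (h2 : q ≠ ⟨(p : ℕ) + 1, hp⟩) :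
      HeckeRel N
        (FreeAlgebra.ι ℂ (Sum.inl (swap p ⟨(p : ℕ) + 1, hp⟩)) * FreeAlgebra.ι ℂ (Sum.inr q))
        (FreeAlgebra.ι ℂ (Sum.inr q) * FreeAlgebra.ι ℂ (Sum.inl (swap p ⟨(p : ℕ) + 1, hp⟩)))
  | cross2 (p : Fin N) (hp : (p : ℕ) + 1 < N) :
      HeckeRel N
        (FreeAlgebra.ι ℂ (Sum.inl (swap p ⟨(p : ℕ) + 1, hp⟩)) * FreeAlgebra.ι ℂ (Sum.inr p))
        (FreeAlgebra.ι ℂ (Sum.inr ⟨(p : ℕ) + 1, hp⟩) *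
          FreeAlgebra.ι ℂ (Sum.inl (swap p ⟨(p : ℕ) + 1, hp⟩)) - 1)

/-- The degenerate affine Hecke algebra `H_N`. -/
abbrev DAHA (N : ℕ) := RingQuot (HeckeRel N)

/-- The image of a permutation `σ ∈ S_N` in `H_N` (i.e. the embedding of `ℂ S_N`). -/
noncomputable def dahaGroup (N : ℕ) (σ : Equiv.Perm (Fin N)) : DAHA N :=
  RingQuot.mkAlgHom ℂ (HeckeRel N) (FreeAlgebra.ι ℂ (Sum.inl σ))

/-- The commuting generators `x_p` of `H_N`. -/
noncomputable def dahaX (N : ℕ) (p : Fin N) : DAHA N :=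
  RingQuot.mkAlgHom ℂ (HeckeRel N) (FreeAlgebra.ι ℂ (Sum.inr p))

/-- The elements `y_p = x_p - σ_{1p} - … - σ_{p-1,p}` of `H_N`. -/
noncomputable def dahaY (N : ℕ) (p : Fin N) : DAHA N :=
  dahaX N p - ∑ q ∈ Finset.univ.filter (fun q => q < p), dahaGroup N (swap q p)

/- We model the tensor product `V ⊗ (ℂ^m)^{⊗N}` as the space of functions
`(Fin N → Fin m) → V`, recording the coefficient of the basis vector
`e_{g(1)} ⊗ … ⊗ e_{g(N)}` of `(ℂ^m)^{⊗N}` at `g : Fin N → Fin m`. -/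

variable {V : Type*} [AddCommGroup V] [Module ℂ V]

/-- The permutation action of `σ ∈ S_N` on `V ⊗ (ℂ^m)^{⊗N}`, permuting the
`N` tensor factors `ℂ^m` (so that `e_g ↦ e_{g ∘ σ⁻¹}`). -/
noncomputable def permL (m N : ℕ) (σ : Equiv.Perm (Fin N)) :
    Module.End ℂ ((Fin N → Fin m) → V) where
  toFun F := fun h => F (h ∘ σ)
  map_add' _ _ := rfl
  map_smul' _ _ := rfl

/-- The operator `Σ_{a,b} E_{ba} ⊗ E_{ab}^{(p)}` on `V ⊗ (ℂ^m)^{⊗N}`, where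
`ρ b a` is the action of the matrix unit `E_{ba} ∈ gl_m` on `V` and
`E_{ab}^{(p)}` is the matrix unit acting in the `p`-th tensor factor `ℂ^m`. -/
noncomputable def yL (m N : ℕ) (ρ : Fin m → Fin m → Module.End ℂ V) (p : Fin N) :
    Module.End ℂ ((Fin N → Fin m) → V) where
  toFun F := fun h => ∑ b : Fin m, ρ b (h p) (F (Function.update h p b))
  map_add' F G := by
    funext h
    simp [Finset.sum_add_distrib]
  map_smul' c F := by
    funext h
    simp [Finset.smul_sum]

/-- The diagonal action of the matrix unit `E_{ab} ∈ gl_m` on `V ⊗ (ℂ^m)^{⊗N}`,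
namely `E_{ab} ⊗ 1 ⊗ … ⊗ 1 + Σ_p 1 ⊗ … ⊗ E_{ab}^{(p)} ⊗ … ⊗ 1`. -/
noncomputable def glDiagL (m N : ℕ) (ρ : Fin m → Fin m → Module.End ℂ V) (a b : Fin m) :
    Module.End ℂ ((Fin N → Fin m) → V) where
  toFun F := fun h => ρ a b (F h) +
    ∑ p : Fin N, if h p = a then F (Function.update h p b) else 0
  map_add' F G := by
    funext h
    have key : ∀ p : Fin N,
        (if h p = a then F (Function.update h p b) + G (Function.update h p b) else 0)
          = (if h p = a then F (Function.update h p b) else 0)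
            + (if h p = a then G (Function.update h p b) else 0) := by
      intro p; split <;> simp
    simp only [Pi.add_apply, map_add, key, Finset.sum_add_distrib]
    abel
  map_smul' c F := by
    funext h
    have key : ∀ p : Fin N,
        (if h p = a then c • F (Function.update h p b) else 0)
          = c • (if h p = a then F (Function.update h p b) else 0) := by
      intro p; split <;> simp
    simp only [Pi.smul_apply, map_smul, key, ← Finset.smul_sum, RingHom.id_apply,
      smul_add]

namespace Cherednik
variable {V : Type*} [AddCommGroup V] [Module ℂ V] {m N : ℕ}
  (ρ : Fin m → Fin m → Module.End ℂ V)

lemma permL_mul (σ τ : Equiv.Perm (Fin N)) :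
    permL (V := V) m N (σ * τ) = permL m N σ * permL m N τ := by
  ext F h
  rfl

lemma permL_one : permL (V := V) m N 1 = 1 := by
  ext F h
  rfl

lemma permL_yL (σ : Equiv.Perm (Fin N)) (p : Fin N) :
    permL m N σ * yL m N ρ p = yL m N ρ (σ p) * permL m N σ := by
  refine LinearMap.ext fun F => funext fun h => ?_
  show ∑ b, ρ b ((h ∘ σ) p) (F (Function.update (h ∘ σ) p b))
      = ∑ b, ρ b (h (σ p)) (F (Function.update h (σ p) b ∘ σ))
  refine Finset.sum_congr rfl fun b _ => ?_
  rw [Function.update_comp_equiv]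
  simp

lemma yL_comm
    (hρ : ∀ a b c d : Fin m,
      ρ a b * ρ c d - ρ c d * ρ a b
        = (if b = c then ρ a d else 0) - (if d = a then ρ c b else 0))
    (p q : Fin N) (hpq : p ≠ q) :
    yL m N ρ p * yL m N ρ q - yL m N ρ q * yL m N ρ p
      = permL m N (swap p q) * yL m N ρ p - permL m N (swap p q) * yL m N ρ q := by
  refine LinearMap.ext fun F => funext fun h => ?_
  have hsp : (h ∘ swap p q) p = h q := by simp
  have hsq : (h ∘ swap p q) q = h p := by simp
  have u0 : ∀ b : Fin m, (Function.update h p b) q = h q :=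
    fun b => Function.update_of_ne hpq.symm _ _
  have u0' : ∀ c : Fin m, (Function.update h q c) p = h p :=
    fun c => Function.update_of_ne hpq _ _
  have uc : ∀ b c : Fin m, Function.update (Function.update h p b) q c
      = Function.update (Function.update h q c) p b :=
    fun b c => Function.update_comm hpq _ _ _
  have u1 : ∀ b : Fin m, Function.update (h ∘ swap p q) p b
      = Function.update (Function.update h q (h p)) p b := by
    intro b; funext x
    rcases eq_or_ne x p with rfl | hx1
    · simp
    · rcases eq_or_ne x q with rfl | hx2
      · simp [Function.update_of_ne hx1, hpq]
      · simp [Function.update_of_ne hx1, Function.update_of_ne hx2,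
          Equiv.swap_apply_of_ne_of_ne hx1 hx2]
  have u2 : ∀ c : Fin m, Function.update (h ∘ swap p q) q c
      = Function.update (Function.update h q c) p (h q) := by
    intro c; funext x
    rcases eq_or_ne x q with rfl | hx2
    · simp [Function.update_of_ne hpq.symm]
    · rcases eq_or_ne x p with rfl | hx1
      · simp [Function.update_of_ne hx2]
      · simp [Function.update_of_ne hx1, Function.update_of_ne hx2,
          Equiv.swap_apply_of_ne_of_ne hx1 hx2]
  show (∑ b : Fin m, ρ b (h p) (∑ c : Fin m,
          ρ c (Function.update h p b q) (F (Function.update (Function.update h p b) q c))))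
      - (∑ c : Fin m, ρ c (h q) (∑ b : Fin m,
          ρ b (Function.update h q c p) (F (Function.update (Function.update h q c) p b))))
      = (∑ b : Fin m, ρ b ((h ∘ swap p q) p) (F (Function.update (h ∘ swap p q) p b)))
      - (∑ c : Fin m, ρ c ((h ∘ swap p q) q) (F (Function.update (h ∘ swap p q) q c)))
  simp only [u0, u0', uc, hsp, hsq, u1, u2, map_sum]
  rw [Finset.sum_comm (s := Finset.univ) (t := Finset.univ)
    (f := fun c b => ρ c (h q) (ρ b (h p) (F (Function.update (Function.update h q c) p b))))]
  rw [← Finset.sum_sub_distrib]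
  have key : ∀ (b c : Fin m) (v : V), ρ b (h p) (ρ c (h q) v) - ρ c (h q) (ρ b (h p) v)
      = (if h p = c then ρ b (h q) v else 0) - (if h q = b then ρ c (h p) v else 0) := by
    intro b c v
    have := congrArg (fun L : Module.End ℂ V => L v) (hρ b (h p) c (h q))
    simpa [LinearMap.sub_apply, Module.End.mul_apply,
      apply_ite (fun L : Module.End ℂ V => L v)] using this
  calc ∑ b : Fin m, ((∑ c : Fin m,
          ρ b (h p) (ρ c (h q) (F (Function.update (Function.update h q c) p b))))
        - ∑ c : Fin m,
          ρ c (h q) (ρ b (h p) (F (Function.update (Function.update h q c) p b))))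
      = ∑ b : Fin m, ∑ c : Fin m,
          ((if h p = c then ρ b (h q) (F (Function.update (Function.update h q c) p b)) else 0)
          - (if h q = b then ρ c (h p) (F (Function.update (Function.update h q c) p b)) else 0)) := by
        refine Finset.sum_congr rfl fun b _ => ?_
        rw [← Finset.sum_sub_distrib]
        exact Finset.sum_congr rfl fun c _ => key b c _
    _ = (∑ b : Fin m, ∑ c : Fin m,
          (if h p = c then ρ b (h q) (F (Function.update (Function.update h q c) p b)) else 0))
        - ∑ c : Fin m, ∑ b : Fin m,
          (if h q = b then ρ c (h p) (F (Function.update (Function.update h q c) p b)) else 0) := by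
        rw [← Finset.sum_comm (s := Finset.univ) (t := Finset.univ)
          (f := fun b c => if h q = b then ρ c (h p) (F (Function.update (Function.update h q c) p b)) else 0)]
        rw [← Finset.sum_sub_distrib]
        exact Finset.sum_congr rfl fun b _ => Finset.sum_sub_distrib _ _
    _ = (∑ b : Fin m, ρ b (h q) (F (Function.update (Function.update h q (h p)) p b)))
        - ∑ c : Fin m, ρ c (h p) (F (Function.update (Function.update h q c) p (h q))) := by
        congr 1 <;> exact Finset.sum_congr rfl fun _ _ => by rw [Finset.sum_ite_eq]; simp

noncomputable def AA (m N : ℕ) (p : Fin N) : Module.End ℂ ((Fin N → Fin m) → V) :=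
  ∑ q ∈ Finset.univ.filter (fun q => q < p), permL m N (swap q p)

noncomputable def XL (m N : ℕ) (ρ : Fin m → Fin m → Module.End ℂ V) (p : Fin N) :
    Module.End ℂ ((Fin N → Fin m) → V) :=
  yL m N ρ p + AA m N p

lemma comm_AA (L : Module.End ℂ ((Fin N → Fin m) → V)) (p : Fin N)
    (hL : ∀ s : Fin N, s < p → L * permL m N (swap s p) = permL m N (swap s p) * L) :
    L * AA m N p = AA m N p * L := by
  rw [AA, Finset.mul_sum, Finset.sum_mul]
  exact Finset.sum_congr rfl fun s hs => hL s (by simpa using hs)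

lemma AA_perm (t : Equiv.Perm (Fin N)) (p : Fin N) (htp : t p = p)
    (hlt : ∀ r, t r < p ↔ r < p) :
    AA (V := V) m N p * permL m N t = permL m N t * AA m N p := by
  rw [AA, Finset.sum_mul, Finset.mul_sum]
  have hinv : t⁻¹ p = p := by
    conv_lhs => rw [← htp]
    simp
  refine Finset.sum_equiv t⁻¹ (fun r => ?_) (fun r hr => ?_)
  · simp only [Finset.mem_filter, Finset.mem_univ, true_and]
    rw [← hlt (t⁻¹ r)]
    simp
  · rw [← permL_mul, ← permL_mul, Equiv.swap_mul_eq_mul_swap, hinv]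

lemma XX_comm
    (hρ : ∀ a b c d : Fin m,
      ρ a b * ρ c d - ρ c d * ρ a b
        = (if b = c then ρ a d else 0) - (if d = a then ρ c b else 0))
    (p q : Fin N) : XL m N ρ p * XL m N ρ q = XL m N ρ q * XL m N ρ p := by
  suffices H : ∀ p q : Fin N, q < p → XL (V := V) m N ρ p * XL m N ρ q = XL m N ρ q * XL m N ρ p by
    rcases lt_trichotomy p q with h | rfl | h
    · exact (H q p h).symm
    · rfl
    · exact H p q h
  clear p q
  intro p q hqp
  have hne : p ≠ q := hqp.ne'
  set S := permL (V := V) m N (swap q p) with hS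
  set Yp := yL m N ρ p
  set Yq := yL m N ρ q
  set Ap := AA (V := V) m N p
  set Aq := AA (V := V) m N q
  have h5 : S * Yq = Yp * S := by
    have := permL_yL ρ (swap q p) q
    rwa [Equiv.swap_apply_left] at this
  have h5' : S * Yp = Yq * S := by
    have := permL_yL ρ (swap q p) p
    rwa [Equiv.swap_apply_right] at this
  have h1 : Yp * Yq - Yq * Yp = S * Yp - S * Yq := by
    have := yL_comm ρ hρ p q hne
    rwa [Equiv.swap_comm p q] at this
  have h2 : Yp * Aq = Aq * Yp := by
    refine comm_AA _ _ fun r hr => ?_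
    have hrp : (swap r q) p = p :=
      Equiv.swap_apply_of_ne_of_ne (hr.trans hqp).ne' hne
    have := permL_yL ρ (swap r q) p
    rw [hrp] at this
    exact this.symm
  have h3 : Ap * Yq - Yq * Ap = Yp * S - S * Yp := by
    have hq : q ∈ Finset.univ.filter (fun r : Fin N => r < p) := by simp [hqp]
    rw [show Ap = ∑ r ∈ Finset.univ.filter (fun r : Fin N => r < p), permL m N (swap r p) from rfl]
    rw [Finset.sum_mul, Finset.mul_sum, ← Finset.sum_sub_distrib,
      ← Finset.add_sum_erase _ _ hq]
    have hrest : ∀ r ∈ (Finset.univ.filter (fun r : Fin N => r < p)).erase q,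
        permL (V := V) m N (swap r p) * Yq - Yq * permL m N (swap r p) = 0 := by
      intro r hr
      simp only [Finset.mem_erase, Finset.mem_filter, Finset.mem_univ, true_and] at hr
      have hqr : (swap r p) q = q := Equiv.swap_apply_of_ne_of_ne (Ne.symm hr.1) hne.symm
      have := permL_yL ρ (swap r p) q
      rw [hqr] at this
      rw [this, sub_self]
    rw [Finset.sum_eq_zero hrest, add_zero, ← hS, h5, ← h5']
  have h4 : Ap * Aq = Aq * Ap := by
    refine comm_AA _ _ fun s hs => ?_
    have hsp : s < p := hs.trans hqp
    refine AA_perm _ _ ?_ ?_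
    · exact Equiv.swap_apply_of_ne_of_ne hsp.ne' hne
    · intro r
      rcases eq_or_ne r s with rfl | hr1
      · rw [Equiv.swap_apply_left]
        exact iff_of_true hqp hsp
      rcases eq_or_ne r q with rfl | hr2
      · rw [Equiv.swap_apply_right]
        exact iff_of_true hsp hqp
      · rw [Equiv.swap_apply_of_ne_of_ne hr1 hr2]
  have expand : XL m N ρ p * XL m N ρ q - XL m N ρ q * XL m N ρ p
      = (Yp * Yq - Yq * Yp) + ((Ap * Yq - Yq * Ap)
        + ((Yp * Aq - Aq * Yp) + (Ap * Aq - Aq * Ap))) := by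
    simp only [XL, ← hS]
    noncomm_ring
  have hzero : XL m N ρ p * XL m N ρ q - XL m N ρ q * XL m N ρ p = 0 := by
    rw [expand, h1, h3, h2, h4, sub_self, sub_self, add_zero, add_zero, h5]
    abel
  exact sub_eq_zero.mp hzero

lemma cross1_op (p : Fin N) (hp : (p : ℕ) + 1 < N) (q : Fin N)
    (h1 : q ≠ p) (h2 : q ≠ ⟨(p : ℕ) + 1, hp⟩) :
    permL m N (swap p ⟨(p : ℕ) + 1, hp⟩) * XL m N ρ q
      = XL m N ρ q * permL m N (swap p ⟨(p : ℕ) + 1, hp⟩) := by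
  set p' : Fin N := ⟨(p : ℕ) + 1, hp⟩ with hp'
  have hv1 : (q : ℕ) ≠ (p : ℕ) := fun h => h1 (Fin.val_injective h)
  have hv2 : (q : ℕ) ≠ (p : ℕ) + 1 := fun h => h2 (Fin.val_injective h)
  have hsq : (swap p p') q = q := Equiv.swap_apply_of_ne_of_ne h1 h2
  rw [XL, mul_add, add_mul]
  congr 1
  · have := permL_yL ρ (swap p p') q
    rwa [hsq] at this
  · refine (AA_perm _ _ hsq ?_).symm
    intro r
    rcases eq_or_ne r p with rfl | hr1
    · rw [Equiv.swap_apply_left]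
      simp only [Fin.lt_def, hp']
      omega
    rcases eq_or_ne r p' with rfl | hr2
    · rw [Equiv.swap_apply_right]
      simp only [Fin.lt_def, hp']
      omega
    · rw [Equiv.swap_apply_of_ne_of_ne hr1 hr2]

lemma cross2_op (p : Fin N) (hp : (p : ℕ) + 1 < N) :
    permL m N (swap p ⟨(p : ℕ) + 1, hp⟩) * XL m N ρ p
      = XL m N ρ ⟨(p : ℕ) + 1, hp⟩ * permL m N (swap p ⟨(p : ℕ) + 1, hp⟩) - 1 := by
  set p' : Fin N := ⟨(p : ℕ) + 1, hp⟩ with hp'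
  have hpp' : p ≠ p' := by
    simp only [Ne, Fin.ext_iff, hp']
    omega
  have hsplit : Finset.univ.filter (fun r : Fin N => r < p')
      = insert p (Finset.univ.filter (fun r : Fin N => r < p)) := by
    ext r
    simp only [Finset.mem_filter, Finset.mem_univ, true_and, Finset.mem_insert,
      Fin.lt_def, Fin.ext_iff, hp']
    omega
  have hp_not : p ∉ Finset.univ.filter (fun r : Fin N => r < p) := by simp
  have hAp' : AA (V := V) m N p' = permL m N (swap p p')
      + ∑ r ∈ Finset.univ.filter (fun r : Fin N => r < p), permL m N (swap r p') := by
    rw [AA, hsplit, Finset.sum_insert hp_not]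
  have hPA : permL (V := V) m N (swap p p') * AA m N p
      = (∑ r ∈ Finset.univ.filter (fun r : Fin N => r < p), permL m N (swap r p'))
        * permL m N (swap p p') := by
    rw [AA, Finset.mul_sum, Finset.sum_mul]
    refine Finset.sum_congr rfl fun r hr => ?_
    simp only [Finset.mem_filter, Finset.mem_univ, true_and] at hr
    have hr1 : r ≠ p := hr.ne
    have hr2 : (swap p p') r = r := by
      refine Equiv.swap_apply_of_ne_of_ne hr1 ?_
      simp only [Ne, Fin.ext_iff, hp']
      have := hr
      simp only [Fin.lt_def] at this
      omega
    rw [← permL_mul, ← permL_mul, Equiv.mul_swap_eq_swap_mul, hr2, Equiv.swap_apply_left]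
  have hYp : permL m N (swap p p') * yL m N ρ p = yL m N ρ p' * permL m N (swap p p') := by
    have := permL_yL ρ (swap p p') p
    rwa [Equiv.swap_apply_left] at this
  have hss : permL (V := V) m N (swap p p') * permL m N (swap p p') = 1 := by
    rw [← permL_mul, Equiv.swap_mul_self, permL_one]
  rw [XL, XL, mul_add, add_mul, hYp, hPA, hAp', add_mul, hss]
  abel

noncomputable def KL (m N : ℕ) (a b : Fin m) (q : Fin N) :
    Module.End ℂ ((Fin N → Fin m) → V) where
  toFun F := fun h => if h q = a then F (Function.update h q b) else 0
  map_add' F G := by funext h; dsimp only [Pi.add_apply]; split <;> simp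
  map_smul' c F := by funext h; dsimp only [Pi.smul_apply]; split <;> simp

lemma glDiag_eq (a b : Fin m) :
    glDiagL (V := V) m N ρ a b
      = LinearMap.compLeft (ρ a b) (Fin N → Fin m) + ∑ q : Fin N, KL m N a b q := by
  refine LinearMap.ext fun F => funext fun h => ?_
  have key : (LinearMap.compLeft (ρ a b) (Fin N → Fin m) + ∑ q : Fin N, KL (V := V) m N a b q) F h
      = ρ a b (F h) + ∑ q : Fin N, (if h q = a then F (Function.update h q b) else 0) := by
    simp only [LinearMap.add_apply, LinearMap.sum_apply, Pi.add_apply, Finset.sum_apply]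
    rfl
  exact key.symm

lemma permL_glDiag (σ : Equiv.Perm (Fin N)) (a b : Fin m) :
    permL (V := V) m N σ * glDiagL m N ρ a b = glDiagL m N ρ a b * permL m N σ := by
  refine LinearMap.ext fun F => funext fun h => ?_
  show ρ a b (F (h ∘ σ)) + ∑ p : Fin N, (if h (σ p) = a then F (Function.update (h ∘ σ) p b) else 0)
      = ρ a b (F (h ∘ σ)) + ∑ p : Fin N, (if h p = a then F (Function.update h p b ∘ σ) else 0)
  congr 1
  rw [← Equiv.sum_comp σ (fun p => if h p = a then F (Function.update h p b ∘ ⇑σ) else 0)]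
  refine Finset.sum_congr rfl fun p _ => ?_
  have hu : Function.update h (σ p) b ∘ ⇑σ = Function.update (h ∘ ⇑σ) p b := by
    rw [Function.update_comp_equiv]
    simp
  rw [hu]

lemma K_yL (a b : Fin m) (q p : Fin N) (hqp : q ≠ p) :
    KL (V := V) m N a b q * yL m N ρ p = yL m N ρ p * KL m N a b q := by
  refine LinearMap.ext fun F => funext fun h => ?_
  show (if h q = a then
        ∑ c : Fin m, ρ c (Function.update h q b p) (F (Function.update (Function.update h q b) p c))
      else 0)
    = ∑ c : Fin m, ρ c (h p)
        (if Function.update h p c q = a then F (Function.update (Function.update h p c) q b) else 0)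
  have e1 : Function.update h q b p = h p := Function.update_of_ne hqp.symm _ _
  have e2 : ∀ c, Function.update h p c q = h q := fun c => Function.update_of_ne hqp _ _
  have e3 : ∀ c, Function.update (Function.update h q b) p c
      = Function.update (Function.update h p c) q b :=
    fun c => Function.update_comm hqp _ _ _
  simp only [e1, e2, e3]
  by_cases hqa : h q = a
  · simp [hqa]
  · simp [hqa]

lemma DK_yL
    (hρ : ∀ a b c d : Fin m,
      ρ a b * ρ c d - ρ c d * ρ a b
        = (if b = c then ρ a d else 0) - (if d = a then ρ c b else 0))
    (a b : Fin m) (p : Fin N) :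
    (LinearMap.compLeft (ρ a b) (Fin N → Fin m) + KL m N a b p) * yL m N ρ p
      = yL m N ρ p * (LinearMap.compLeft (ρ a b) (Fin N → Fin m) + KL m N a b p) := by
  refine LinearMap.ext fun F => funext fun h => ?_
  set v : Fin m → V := fun c => F (Function.update h p c) with hv
  show ρ a b (∑ c : Fin m, ρ c (h p) (v c))
      + (if h p = a then
          ∑ c : Fin m, ρ c (Function.update h p b p) (F (Function.update (Function.update h p b) p c))
        else 0)
    = ∑ c : Fin m, ρ c (h p) (ρ a b (v c) +
        (if Function.update h p c p = a then F (Function.update (Function.update h p c) p b) else 0))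
  have e1 : Function.update h p b p = b := Function.update_self _ _ _
  have e2 : ∀ c : Fin m, Function.update (Function.update h p b) p c = Function.update h p c :=
    fun c => Function.update_idem _ _ _
  have e3 : ∀ c : Fin m, Function.update h p c p = c := fun c => Function.update_self _ _ _
  have e4 : ∀ c : Fin m, Function.update (Function.update h p c) p b = Function.update h p b :=
    fun c => Function.update_idem _ _ _
  simp only [e1, e2, e3, e4, map_add, ← hv]
  simp only [show ∀ c, F (Function.update h p c) = v c from fun c => rfl]
  have last : ∀ c : Fin m, ρ c (h p) (if c = a then v b else 0)
      = if c = a then ρ c (h p) (v b) else 0 := by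
    intro c; split <;> simp
  rw [Finset.sum_add_distrib]
  simp only [last, Finset.sum_ite_eq' Finset.univ a (fun c => ρ c (h p) (v b)),
    Finset.mem_univ, if_true]
  have key : ρ a b (∑ c : Fin m, ρ c (h p) (v c)) - ∑ c : Fin m, ρ c (h p) (ρ a b (v c))
      = ρ a (h p) (v b) - (if h p = a then ∑ c : Fin m, ρ c b (v c) else 0) := by
    rw [map_sum, ← Finset.sum_sub_distrib]
    have term : ∀ c : Fin m, ρ a b (ρ c (h p) (v c)) - ρ c (h p) (ρ a b (v c))
        = (if b = c then ρ a (h p) (v c) else 0) - (if h p = a then ρ c b (v c) else 0) := by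
      intro c
      have := congrArg (fun L : Module.End ℂ V => L (v c)) (hρ a b c (h p))
      simpa [LinearMap.sub_apply, Module.End.mul_apply,
        apply_ite (fun L : Module.End ℂ V => L (v c))] using this
    rw [Finset.sum_congr rfl fun c _ => term c, Finset.sum_sub_distrib]
    congr 1
    · rw [Finset.sum_ite_eq Finset.univ b (fun c => ρ a (h p) (v c))]
      simp
    · split
      · rfl
      · simp
  have h0 : (ρ a b (∑ c : Fin m, ρ c (h p) (v c))
        + (if h p = a then ∑ c : Fin m, ρ c b (v c) else 0))
      - ((∑ c : Fin m, ρ c (h p) (ρ a b (v c))) + ρ a (h p) (v b)) = 0 := by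
    have rearr : (ρ a b (∑ c : Fin m, ρ c (h p) (v c))
        + (if h p = a then ∑ c : Fin m, ρ c b (v c) else 0))
      - ((∑ c : Fin m, ρ c (h p) (ρ a b (v c))) + ρ a (h p) (v b))
      = (ρ a b (∑ c : Fin m, ρ c (h p) (v c)) - ∑ c : Fin m, ρ c (h p) (ρ a b (v c)))
        - (ρ a (h p) (v b) - (if h p = a then ∑ c : Fin m, ρ c b (v c) else 0)) := by abel
    rw [rearr, key, sub_self]
  exact sub_eq_zero.mp h0

lemma yL_glDiag
    (hρ : ∀ a b c d : Fin m,
      ρ a b * ρ c d - ρ c d * ρ a b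
        = (if b = c then ρ a d else 0) - (if d = a then ρ c b else 0))
    (p : Fin N) (a b : Fin m) :
    yL m N ρ p * glDiagL m N ρ a b = glDiagL m N ρ a b * yL m N ρ p := by
  rw [glDiag_eq]
  set D := LinearMap.compLeft (ρ a b) (Fin N → Fin m) with hD
  rw [mul_add, add_mul, Finset.mul_sum, Finset.sum_mul]
  have hpmem : p ∈ (Finset.univ : Finset (Fin N)) := Finset.mem_univ p
  rw [← Finset.add_sum_erase _ (fun q => yL m N ρ p * KL (V := V) m N a b q) hpmem,
    ← Finset.add_sum_erase _ (fun q => KL (V := V) m N a b q * yL m N ρ p) hpmem]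
  have hrest : ∀ q ∈ Finset.univ.erase p,
      yL m N ρ p * KL (V := V) m N a b q = KL m N a b q * yL m N ρ p :=
    fun q hq => (K_yL ρ a b q p (Finset.mem_erase.mp hq).1).symm
  rw [Finset.sum_congr rfl hrest]
  have h1 : yL m N ρ p * D + yL m N ρ p * KL m N a b p
      = D * yL m N ρ p + KL m N a b p * yL m N ρ p := by
    have := DK_yL ρ hρ a b p
    rw [add_mul, mul_add] at this
    exact this.symm
  rw [← add_assoc, ← add_assoc, h1]

lemma XL_glDiag
    (hρ : ∀ a b c d : Fin m,
      ρ a b * ρ c d - ρ c d * ρ a b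
        = (if b = c then ρ a d else 0) - (if d = a then ρ c b else 0))
    (p : Fin N) (a b : Fin m) :
    XL m N ρ p * glDiagL m N ρ a b = glDiagL m N ρ a b * XL m N ρ p := by
  rw [XL, add_mul, mul_add, yL_glDiag ρ hρ]
  congr 1
  rw [AA, Finset.sum_mul, Finset.mul_sum]
  exact Finset.sum_congr rfl fun q _ => permL_glDiag ρ _ a b

end Cherednik

/-- Proposition 1.1, Cherednik:  for a `gl_m`-module `V`
(the action of matrix units `E_{ab}` being `ρ a b`), there is an action of
the degenerate affine Hecke algebra `H_N` on `V ⊗ (ℂ^m)^{⊗N}` in which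
`S_N ⊂ H_N` acts by permuting the `N` tensor factors `ℂ^m` and
`y_p` acts as `Σ_{a,b} E_{ba} ⊗ E_{ab}^{(p)}`; moreover this action commutes
with the diagonal action of `gl_m`. -/
theorem cherednik_action (m N : ℕ) (ρ : Fin m → Fin m → Module.End ℂ V)
    (hρ : ∀ a b c d : Fin m,
      ρ a b * ρ c d - ρ c d * ρ a b
        = (if b = c then ρ a d else 0) - (if d = a then ρ c b else 0)) :
    ∃ φ : DAHA N →ₐ[ℂ] Module.End ℂ ((Fin N → Fin m) → V),
      (∀ σ : Equiv.Perm (Fin N), φ (dahaGroup N σ) = permL m N σ) ∧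
      (∀ p : Fin N, φ (dahaY N p) = yL m N ρ p) ∧
      (∀ (d : DAHA N) (a b : Fin m), Commute (φ d) (glDiagL m N ρ a b)) := by
  refine ⟨RingQuot.liftAlgHom ℂ ⟨FreeAlgebra.lift ℂ
      (Sum.elim (fun σ => permL (V := V) m N σ) (fun p => Cherednik.XL m N ρ p)), ?_⟩,
    ?_, ?_, ?_⟩
  · intro x y hxy
    induction hxy with
    | group_one =>
        rw [map_one, FreeAlgebra.lift_ι_apply, Sum.elim_inl]
        exact Cherednik.permL_one
    | group_mul σ τ =>
        rw [map_mul, FreeAlgebra.lift_ι_apply, FreeAlgebra.lift_ι_apply,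
          FreeAlgebra.lift_ι_apply, Sum.elim_inl, Sum.elim_inl, Sum.elim_inl]
        exact (Cherednik.permL_mul σ τ).symm
    | x_comm p q =>
        simp only [map_mul, FreeAlgebra.lift_ι_apply, Sum.elim_inr]
        exact Cherednik.XX_comm ρ hρ p q
    | cross1 p hplt q h1 h2 =>
        simp only [map_mul, FreeAlgebra.lift_ι_apply, Sum.elim_inl, Sum.elim_inr]
        exact Cherednik.cross1_op ρ p hplt q h1 h2
    | cross2 p hplt =>
        simp only [map_mul, map_sub, map_one, FreeAlgebra.lift_ι_apply,
          Sum.elim_inl, Sum.elim_inr]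
        exact Cherednik.cross2_op ρ p hplt
  · intro σ
    rw [dahaGroup, RingQuot.liftAlgHom_mkAlgHom_apply, FreeAlgebra.lift_ι_apply, Sum.elim_inl]
  · intro p
    rw [dahaY, map_sub, dahaX, RingQuot.liftAlgHom_mkAlgHom_apply,
      FreeAlgebra.lift_ι_apply, Sum.elim_inr, map_sum]
    simp only [dahaGroup, RingQuot.liftAlgHom_mkAlgHom_apply, FreeAlgebra.lift_ι_apply,
      Sum.elim_inl]
    rw [Cherednik.XL,
      show (∑ q ∈ Finset.univ.filter (fun q => q < p), permL (V := V) m N (swap q p))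
        = Cherednik.AA m N p from rfl, add_sub_cancel_right]
  · intro d a b
    obtain ⟨x, rfl⟩ := RingQuot.mkAlgHom_surjective ℂ (HeckeRel N) d
    induction x with
    | grade0 r =>
        rw [AlgHom.commutes, AlgHom.commutes]
        exact Algebra.commute_algebraMap_left r _
    | grade1 x =>
        rw [RingQuot.liftAlgHom_mkAlgHom_apply, FreeAlgebra.lift_ι_apply]
        cases x with
        | inl σ => exact Cherednik.permL_glDiag ρ σ a b
        | inr p => exact Cherednik.XL_glDiag ρ hρ p a b
    | mul x y ihx ihy =>
        rw [map_mul, map_mul]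
        exact ihx.mul_left ihy
    | add x y ihx ihy =>
        rw [map_add, map_add]
        exact ihx.add_left ihy
end

section
/- In the tensor product algebra U(gl_m) ⊗ GD(C^m ⊗ C^n), for each s ≥ 0 and i,j ∈ {1,...,n} define T_{ij}^{(s+1)} = Σ_{c_0,...,c_s=1}^m E_{c_1 c_0} E_{c_2 c_1} ··· E_{c_s c_{s−1}} ⊗ x_{c_0 i} ∂_{c_s j} (with first factor 1 when s = 0). Then each T_{ij}^{(s+1)} commutes with every element Ê_{ab} := E_{ab} ⊗ 1 + Σ_{k=1}^n 1 ⊗ x_{ak} ∂_{bk} for a,b = 1,...,m. -/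
open scoped TensorProduct

section AuxGl
variable {A₁ : Type*} [Ring A₁] {m : ℕ}

/-- Sum over internal indices of products `E_{c1 c0} ⋯ E_{cs c_{s-1}}` with
`c0 = u`, `cs = v`. -/
def glPathSum (E : Fin m → Fin m → A₁) : ℕ → Fin m → Fin m → A₁
  | 0 => fun u v => if u = v then 1 else 0
  | s + 1 => fun u v => ∑ w, E w u * glPathSum E s w v

lemma glPathSum_comm (E : Fin m → Fin m → A₁)
    (hE : ∀ a b c d : Fin m,
      E a b * E c d - E c d * E a b
        = (if b = c then E a d else 0) - (if d = a then E c b else 0)) :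
    ∀ (s : ℕ) (u v a b : Fin m),
      glPathSum E s u v * E a b - E a b * glPathSum E s u v
        = (if u = a then glPathSum E s b v else 0)
          - (if v = b then glPathSum E s u a else 0) := by
  intro s
  induction s with
  | zero =>
    intro u v a b
    simp only [glPathSum]
    have h : (if u = a then (if b = v then (1:A₁) else 0) else 0)
        = (if v = b then (if u = a then (1:A₁) else 0) else 0) := by
      by_cases h2 : u = a <;> by_cases h3 : v = b <;> simp [h2, h3, eq_comm]
    rw [show ((if u = a then (if b = v then (1:A₁) else 0) else 0)
        - (if v = b then (if u = a then (1:A₁) else 0) else 0)) = 0 by rw [h, sub_self]]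
    split_ifs <;> simp
  | succ s ih =>
    intro u v a b
    have ringid : ∀ p q r : A₁, p * q * r - r * (p * q)
        = p * (q * r - r * q) + (p * r - r * p) * q := by
      intros; noncomm_ring
    simp only [glPathSum, Finset.sum_mul, Finset.mul_sum, ← Finset.sum_sub_distrib]
    calc ∑ w, (E w u * glPathSum E s w v * E a b - E a b * (E w u * glPathSum E s w v))
        = ∑ w, (E w u * ((if w = a then glPathSum E s b v else 0)
              - (if v = b then glPathSum E s w a else 0))
            + ((if u = a then E w b else 0) - (if b = w then E a u else 0))
              * glPathSum E s w v) := by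
          refine Finset.sum_congr rfl fun w _ => ?_
          rw [ringid, ih, hE]
      _ = _ := by
          simp only [mul_sub, sub_mul, mul_ite, ite_mul, mul_zero, zero_mul,
            Finset.sum_add_distrib, Finset.sum_sub_distrib,
            Finset.sum_ite_eq, Finset.sum_ite_eq', Finset.mem_univ, if_true]
          by_cases h1 : u = a <;> by_cases h2 : v = b <;> simp [h1, h2] <;> abel

lemma path_sum_gen {M : Type*} [AddCommMonoid M] (E : Fin m → Fin m → A₁) :
    ∀ (s : ℕ) (F : A₁ → Fin m → Fin m → M),
      (∀ (u v : Fin m), F 0 u v = 0) →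
      (∀ (u v : Fin m) (g : Fin m → A₁), F (∑ w, g w) u v = ∑ w, F (g w) u v) →
      ∑ c : Fin (s + 1) → Fin m,
          F ((List.ofFn fun r : Fin s => E (c r.succ) (c r.castSucc)).prod)
            (c 0) (c (Fin.last s))
        = ∑ u, ∑ v, F (glPathSum E s u v) u v := by
  intro s
  induction s with
  | zero =>
    intro F hF0 hFadd
    rw [Fintype.sum_equiv (Equiv.funUnique (Fin 1) (Fin m)) _ (fun u => F 1 u u)
      (fun c => by simp)]
    refine Finset.sum_congr rfl fun u _ => ?_
    rw [show (∑ v, F (glPathSum E 0 u v) u v) = ∑ v, if u = v then F 1 u v else 0 from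
      Finset.sum_congr rfl fun v _ => by simp only [glPathSum]; split_ifs <;> simp [hF0]]
    simp
  | succ s ih =>
    intro F hF0 hFadd
    have reindex :
        (∑ c : Fin (s + 2) → Fin m,
          F ((List.ofFn fun r : Fin (s + 1) => E (c r.succ) (c r.castSucc)).prod)
            (c 0) (c (Fin.last (s + 1))))
        = ∑ p : Fin m × (Fin (s + 1) → Fin m),
            F (E (p.2 0) p.1 *
                (List.ofFn fun r : Fin s => E (p.2 r.succ) (p.2 r.castSucc)).prod)
              p.1 (p.2 (Fin.last s)) := by
      refine (Fintype.sum_equiv (Fin.consEquiv (fun _ : Fin (s + 2) => Fin m)) _ _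
        fun p => ?_).symm
      obtain ⟨w, c⟩ := p
      have hc : (Fin.consEquiv (fun _ : Fin (s + 2) => Fin m)) (w, c)
          = Fin.cons w c := rfl
      rw [hc]
      have hprod : (List.ofFn fun r : Fin (s + 1) =>
          E ((Fin.cons w c : ∀ _ : Fin (s + 2), Fin m) r.succ)
            ((Fin.cons w c : ∀ _ : Fin (s + 2), Fin m) r.castSucc)).prod
          = E (c 0) w *
            (List.ofFn fun r : Fin s => E (c r.succ) (c r.castSucc)).prod := by
        rw [List.ofFn_succ, List.prod_cons]
        congr 1
      have hlast : (Fin.cons w c : ∀ _ : Fin (s + 2), Fin m) (Fin.last (s + 1))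
          = c (Fin.last s) := by
        rw [← Fin.succ_last]
        simp only [Fin.cons_succ]
      have h0 : (Fin.cons w c : ∀ _ : Fin (s + 2), Fin m) 0 = w := rfl
      rw [hprod, hlast, h0]
    rw [reindex, Fintype.sum_prod_type, Finset.sum_comm]
    rw [show (∑ c : Fin (s + 1) → Fin m, ∑ w : Fin m,
        F (E (c 0) w *
            (List.ofFn fun r : Fin s => E (c r.succ) (c r.castSucc)).prod)
          w (c (Fin.last s)))
      = ∑ c : Fin (s + 1) → Fin m,
          (fun (p : A₁) (u v : Fin m) => ∑ w, F (E u w * p) w v)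
            ((List.ofFn fun r : Fin s => E (c r.succ) (c r.castSucc)).prod)
            (c 0) (c (Fin.last s)) from rfl]
    rw [ih (fun p u v => ∑ w, F (E u w * p) w v)
      (fun u v => by simp [hF0])
      (fun u v g => by
        simp only [Finset.mul_sum, hFadd]
        exact Finset.sum_comm)]
    have hW : ∀ w v : Fin m, F (glPathSum E (s + 1) w v) w v
        = ∑ u, F (E u w * glPathSum E s u v) w v := by
      intro w v
      rw [show glPathSum E (s + 1) w v = ∑ u, E u w * glPathSum E s u v from rfl, hFadd]
    have perm : ∀ (H : Fin m → Fin m → Fin m → M),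
        ∑ u, ∑ v, ∑ w, H u v w = ∑ w, ∑ v, ∑ u, H u v w := by
      intro H
      calc ∑ u, ∑ v, ∑ w, H u v w
          = ∑ u, ∑ w, ∑ v, H u v w :=
            Finset.sum_congr rfl fun u _ => Finset.sum_comm
        _ = ∑ w, ∑ u, ∑ v, H u v w := Finset.sum_comm
        _ = ∑ w, ∑ v, ∑ u, H u v w :=
            Finset.sum_congr rfl fun w _ => Finset.sum_comm
    rw [perm (fun u v w => F (E u w * glPathSum E s u v) w v)]
    exact Finset.sum_congr rfl fun w _ =>
      Finset.sum_congr rfl fun v _ => (hW w v).symm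
end AuxGl

section AuxCliff
variable {A₂ : Type*} [Ring A₂] {m n : ℕ}

lemma cliff_sum_comm (x dd : Fin m → Fin n → A₂)
    (hxx : ∀ (a b : Fin m) (i j : Fin n), x a i * x b j = -(x b j * x a i))
    (hdd : ∀ (a b : Fin m) (i j : Fin n), dd a i * dd b j = -(dd b j * dd a i))
    (hxd : ∀ (a b : Fin m) (i j : Fin n),
      x a i * dd b j + dd b j * x a i = if a = b ∧ i = j then 1 else 0)
    (u v a b : Fin m) (i j : Fin n) :
    ∑ k, ((x u i * dd v j) * (x a k * dd b k) - (x a k * dd b k) * (x u i * dd v j))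
      = (if a = v then x u i * dd b j else 0) - (if u = b then x a i * dd v j else 0) := by
  have perk : ∀ k : Fin n,
      (x u i * dd v j) * (x a k * dd b k) - (x a k * dd b k) * (x u i * dd v j)
        = (if a = v ∧ k = j then x u i * dd b k else 0)
          - (if u = b ∧ i = k then x a k * dd v j else 0) := by
    intro k
    have e1 : dd v j * x a k
        = (if a = v ∧ k = j then (1:A₂) else 0) - x a k * dd v j :=
      eq_sub_of_add_eq' (hxd a v k j)
    have e2 : dd b k * x u i
        = (if u = b ∧ i = k then (1:A₂) else 0) - x u i * dd b k :=
      eq_sub_of_add_eq' (hxd u b i k)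
    have cross : x u i * (x a k * dd v j) * dd b k
        = x a k * (x u i * dd b k) * dd v j := by
      calc x u i * (x a k * dd v j) * dd b k
          = (x u i * x a k) * (dd v j * dd b k) := by noncomm_ring
        _ = (-(x a k * x u i)) * (-(dd b k * dd v j)) := by rw [hxx, hdd]
        _ = (x a k * x u i) * (dd b k * dd v j) := by rw [neg_mul_neg]
        _ = x a k * (x u i * dd b k) * dd v j := by noncomm_ring
    have expand : ∀ (c1 c2 : A₂),
        x u i * ((c1 - x a k * dd v j) * dd b k)
          - x a k * ((c2 - x u i * dd b k) * dd v j)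
        = (x u i * c1 * dd b k - x a k * c2 * dd v j)
          + (x a k * (x u i * dd b k) * dd v j
            - x u i * (x a k * dd v j) * dd b k) := by
      intros; noncomm_ring
    calc (x u i * dd v j) * (x a k * dd b k) - (x a k * dd b k) * (x u i * dd v j)
        = x u i * ((dd v j * x a k) * dd b k)
          - x a k * ((dd b k * x u i) * dd v j) := by noncomm_ring
      _ = x u i * (((if a = v ∧ k = j then (1:A₂) else 0) - x a k * dd v j) * dd b k)
          - x a k * (((if u = b ∧ i = k then (1:A₂) else 0) - x u i * dd b k) * dd v j) := by
          rw [e1, e2]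
      _ = (x u i * (if a = v ∧ k = j then (1:A₂) else 0) * dd b k
            - x a k * (if u = b ∧ i = k then (1:A₂) else 0) * dd v j)
          + (x a k * (x u i * dd b k) * dd v j
            - x u i * (x a k * dd v j) * dd b k) := expand _ _
      _ = (if a = v ∧ k = j then x u i * dd b k else 0)
          - (if u = b ∧ i = k then x a k * dd v j else 0) := by
          rw [cross, sub_self, add_zero]
          simp [mul_ite, ite_mul]
  simp only [perk, Finset.sum_sub_distrib]
  congr 1
  · by_cases h : a = v
    · simp [h]
    · simp [h]
  · by_cases h : u = b
    · simp [h, eq_comm]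
    · simp [h]
end AuxCliff

/-- in `U(gl_m) ⊗ GD(ℂ^m ⊗ ℂ^n)` (modelled by the tensor
product of a ℂ-algebra `A₁` with `gl_m`-generators `E a b` and a ℂ-algebra
`A₂` with Clifford generators `x`, `∂`), the elements
`T_{ij}^{(s+1)} = Σ_{c_0,…,c_s} E_{c_1 c_0} ⋯ E_{c_s c_{s-1}} ⊗ x_{c_0 i} ∂_{c_s j}`
commute with every `Ê_{ab} = E_{ab} ⊗ 1 + Σ_k 1 ⊗ x_{ak} ∂_{bk}`. -/
theorem yangian_generators_commute_with_diagonal_gl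
    {A₁ A₂ : Type*} [Ring A₁] [Algebra ℂ A₁] [Ring A₂] [Algebra ℂ A₂]
    (m n : ℕ)
    (E : Fin m → Fin m → A₁)
    (hE : ∀ a b c d : Fin m,
      E a b * E c d - E c d * E a b
        = (if b = c then E a d else 0) - (if d = a then E c b else 0))
    (x dd : Fin m → Fin n → A₂)
    (hxx : ∀ (a b : Fin m) (i j : Fin n), x a i * x b j = -(x b j * x a i))
    (hdd : ∀ (a b : Fin m) (i j : Fin n), dd a i * dd b j = -(dd b j * dd a i))
    (hxd : ∀ (a b : Fin m) (i j : Fin n),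
      x a i * dd b j + dd b j * x a i = if a = b ∧ i = j then 1 else 0) :
    ∀ (s : ℕ) (i j : Fin n) (a b : Fin m),
      Commute
        (∑ c : Fin (s + 1) → Fin m,
          ((List.ofFn fun r : Fin s => E (c r.succ) (c r.castSucc)).prod)
            ⊗ₜ[ℂ] (x (c 0) i * dd (c (Fin.last s)) j))
        (E a b ⊗ₜ[ℂ] (1 : A₂) +
          ∑ k : Fin n, (1 : A₁) ⊗ₜ[ℂ] (x a k * dd b k)) := by
  intro s i j a b
  rw [path_sum_gen E s (fun p u v => p ⊗ₜ[ℂ] (x u i * dd v j))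
    (fun u v => by simp)
    (fun u v g => by simp [TensorProduct.sum_tmul])]
  set G : A₁ ⊗[ℂ] A₂ := ∑ u, ∑ v, glPathSum E s u v ⊗ₜ[ℂ] (x u i * dd v j) with hG
  set S : A₁ ⊗[ℂ] A₂ := ∑ k : Fin n, (1 : A₁) ⊗ₜ[ℂ] (x a k * dd b k) with hS
  show G * (E a b ⊗ₜ[ℂ] (1 : A₂) + S) = (E a b ⊗ₜ[ℂ] (1 : A₂) + S) * G
  rw [← sub_eq_zero]
  have e1 : G * (E a b ⊗ₜ[ℂ] (1 : A₂)) - (E a b ⊗ₜ[ℂ] (1 : A₂)) * G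
      = (∑ v, glPathSum E s b v ⊗ₜ[ℂ] (x a i * dd v j))
        - (∑ u, glPathSum E s u a ⊗ₜ[ℂ] (x u i * dd b j)) := by
    rw [hG]
    calc (∑ u, ∑ v, glPathSum E s u v ⊗ₜ[ℂ] (x u i * dd v j)) * (E a b ⊗ₜ[ℂ] (1 : A₂))
          - (E a b ⊗ₜ[ℂ] (1 : A₂)) * (∑ u, ∑ v, glPathSum E s u v ⊗ₜ[ℂ] (x u i * dd v j))
        = ∑ u, ∑ v, ((glPathSum E s u v * E a b - E a b * glPathSum E s u v)
            ⊗ₜ[ℂ] (x u i * dd v j)) := by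
          simp only [Finset.sum_mul, Finset.mul_sum,
            Algebra.TensorProduct.tmul_mul_tmul, mul_one, one_mul,
            ← Finset.sum_sub_distrib, ← TensorProduct.sub_tmul]
      _ = ∑ u, ∑ v, (((if u = a then glPathSum E s b v else 0)
            - (if v = b then glPathSum E s u a else 0)) ⊗ₜ[ℂ] (x u i * dd v j)) := by
          simp only [glPathSum_comm E hE]
      _ = _ := by
          simp only [TensorProduct.sub_tmul, TensorProduct.ite_tmul,
            Finset.sum_sub_distrib]
          congr 1
          · have h1 : ∀ u : Fin m, (∑ v, if u = a
                then glPathSum E s b v ⊗ₜ[ℂ] (x u i * dd v j) else 0)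
                = if u = a then ∑ v, glPathSum E s b v ⊗ₜ[ℂ] (x u i * dd v j) else 0 := by
              intro u; split_ifs <;> simp
            simp only [h1, Finset.sum_ite_eq, Finset.sum_ite_eq', Finset.mem_univ, if_true]
          · simp only [Finset.sum_ite_eq, Finset.sum_ite_eq', Finset.mem_univ, if_true]
  have hSG : S * G = ∑ u, ∑ v, ∑ k, ((1 : A₁) ⊗ₜ[ℂ] (x a k * dd b k))
      * (glPathSum E s u v ⊗ₜ[ℂ] (x u i * dd v j)) := by
    rw [hS, hG, Finset.sum_mul]
    simp only [Finset.mul_sum]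
    rw [Finset.sum_comm]
    exact Finset.sum_congr rfl fun u _ => Finset.sum_comm
  have e2 : G * S - S * G
      = (∑ u, glPathSum E s u a ⊗ₜ[ℂ] (x u i * dd b j))
        - (∑ v, glPathSum E s b v ⊗ₜ[ℂ] (x a i * dd v j)) := by
    rw [hSG, hG, hS]
    calc (∑ u, ∑ v, glPathSum E s u v ⊗ₜ[ℂ] (x u i * dd v j))
            * (∑ k : Fin n, (1 : A₁) ⊗ₜ[ℂ] (x a k * dd b k))
          - ∑ u, ∑ v, ∑ k, ((1 : A₁) ⊗ₜ[ℂ] (x a k * dd b k))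
            * (glPathSum E s u v ⊗ₜ[ℂ] (x u i * dd v j))
        = ∑ u, ∑ v, (glPathSum E s u v ⊗ₜ[ℂ]
            (∑ k, ((x u i * dd v j) * (x a k * dd b k)
              - (x a k * dd b k) * (x u i * dd v j)))) := by
          simp only [Finset.sum_mul, Finset.mul_sum,
            Algebra.TensorProduct.tmul_mul_tmul, mul_one, one_mul,
            ← Finset.sum_sub_distrib, ← TensorProduct.tmul_sub,
            ← TensorProduct.tmul_sum]
      _ = ∑ u, ∑ v, (glPathSum E s u v ⊗ₜ[ℂ]
            ((if a = v then x u i * dd b j else 0)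
              - (if u = b then x a i * dd v j else 0))) := by
          simp only [cliff_sum_comm x dd hxx hdd hxd]
      _ = _ := by
          simp only [TensorProduct.tmul_sub, TensorProduct.tmul_ite,
            Finset.sum_sub_distrib]
          congr 1
          · simp only [Finset.sum_ite_eq, Finset.sum_ite_eq', Finset.mem_univ, if_true]
          · have h1 : ∀ u : Fin m, (∑ v, if u = b
                then glPathSum E s u v ⊗ₜ[ℂ] (x a i * dd v j) else 0)
                = if u = b then ∑ v, glPathSum E s u v ⊗ₜ[ℂ] (x a i * dd v j) else 0 := by
              intro u; split_ifs <;> simp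
            simp only [h1, Finset.sum_ite_eq, Finset.sum_ite_eq', Finset.mem_univ, if_true]
  calc G * (E a b ⊗ₜ[ℂ] (1 : A₂) + S) - (E a b ⊗ₜ[ℂ] (1 : A₂) + S) * G
      = (G * (E a b ⊗ₜ[ℂ] (1 : A₂)) - (E a b ⊗ₜ[ℂ] (1 : A₂)) * G) + (G * S - S * G) := by
        noncomm_ring
    _ = 0 := by rw [e1, e2]; abel
end

section
/- Let A be an associative algebra containing U(sl_2) with standard generators E, F, H ([H,E] = 2E, [H,F] = −2F, [E,F] = H), localized so that (H − k) is invertible for all integers k. For Y ∈ A define ξ(Y) = Σ_{s≥0} (s! H(H−1)···(H−s+1))^{−1} E^s (ad F)^s (Y), assuming the sum is finite (Y is ad-F-nilpotent). Let J̄ be the right ideal generated by F. Then for any X in the Cartan part (a polynomial in H) and any Y, one has ξ(XY) ∈ θ(X) ξ(Y) + J̄ and ξ(YX) ∈ ξ(Y) θ(X) + J̄, where θ is the shift H ↦ H + 2. -/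
open Finset

namespace ZhAux

set_option linter.unusedSectionVars false
set_option maxHeartbeats 1000000

variable {A : Type*} [Ring A] [Algebra ℚ A]

/-- product of the `Hinv` factors -/
def Qp (Hinv : ℤ → A) (s : ℕ) : A := (List.ofFn fun r : Fin s => Hinv ((r : ℕ) : ℤ)).prod

/-- truncated extremal projector expression, right-associated -/
def xiE (E : A) (Hinv : ℤ → A) (adF : A → A) (M : ℕ) (W : A) : A :=
  ∑ s ∈ Finset.range (M + 1),
    ((s.factorial : ℚ))⁻¹ • (Qp Hinv s * (E ^ s * adF^[s] W))

lemma qnat_smul (n : ℕ) (x : A) : ((n : ℚ)) • x = (n : A) * x := by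
  rw [Nat.cast_smul_eq_nsmul, nsmul_eq_mul]

lemma qtwo_smul (x : A) : ((2 : ℚ)) • x = 2 * x := by
  rw [show (2:ℚ) = ((2:ℕ):ℚ) by norm_num, Nat.cast_smul_eq_nsmul, nsmul_eq_mul]; norm_num

omit [Algebra ℚ A] in
lemma pow_shift (E : A) (n : ℕ) (y : A) : E ^ n * (E * y) = E ^ (n+1) * y := by
  conv_rhs => rw [pow_succ, mul_assoc]

section basic
variable {E F H : A}

omit [Algebra ℚ A] in
lemma FH' (hHF : H * F - F * H = -(2 * F)) (x : A) :
    F * (H * x) = H * (F * x) + 2 * (F * x) := by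
  have h : F * H = H * F - (H * F - F * H) := by noncomm_ring
  rw [hHF] at h
  rw [← mul_assoc, h]; noncomm_ring

lemma EH' (hHE : H * E - E * H = 2 * E) (x : A) :
    E * (H * x) = H * (E * x) - (2:ℚ) • (E * x) := by
  have h : E * H = H * E - (H * E - E * H) := by noncomm_ring
  rw [hHE] at h
  rw [← mul_assoc, h, qtwo_smul]; noncomm_ring

lemma pow_H (hHE : H * E - E * H = 2 * E) (s : ℕ) (x : A) :
    E ^ s * (H * x) = H * (E ^ s * x) - (2 * (s:ℚ)) • (E ^ s * x) := by
  induction s generalizing x with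
  | zero => simp
  | succ n ih =>
      rw [show E ^ (n+1) * (H * x) = E ^ n * (E * (H * x)) by rw [← pow_shift],
        EH' hHE, mul_sub, mul_smul_comm, ih (E * x)]
      simp only [pow_shift]
      push_cast
      match_scalars <;> ring

lemma pow_F (hHE : H * E - E * H = 2 * E) (hEF : E * F - F * E = H) (s : ℕ) (x : A) :
    E ^ (s+1) * (F * x)
      = F * (E ^ (s+1) * x) + ((s:ℚ)+1) • ((H - (s:A)) * (E ^ s * x)) := by
  have hEFx : ∀ y : A, E * (F * y) = F * (E * y) + H * y := by
    intro y
    have h : E * F = F * E + (E * F - F * E) := by noncomm_ring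
    rw [hEF] at h
    rw [← mul_assoc, h]; noncomm_ring
  induction s generalizing x with
  | zero =>
      simp only [pow_one, pow_zero, one_mul, Nat.cast_zero, sub_zero, zero_add, one_smul]
      exact hEFx x
  | succ n ih =>
      rw [show E ^ (n+2) * (F * x) = E ^ (n+1) * (E * (F * x)) by rw [← pow_shift],
        hEFx, mul_add, ih (E * x), pow_H hHE]
      have cast1 : ∀ y : A, (H - ((n:ℕ):A)) * y = H * y - (n:ℚ) • y := by
        intro y; rw [sub_mul, qnat_smul]
      have cast2 : ∀ y : A, (H - (((n+1:ℕ)):A)) * y = H * y - ((n:ℚ)+1) • y := by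
        intro y; rw [sub_mul, show ((((n+1):ℕ)):A) * y = (((n:ℚ)+1)) • y by
          rw [show ((n:ℚ)+1) = (((n+1:ℕ)):ℚ) by push_cast; ring, qnat_smul]]
      rw [cast1, cast2]
      simp only [pow_shift, show n+1+1 = n+2 from rfl]
      push_cast
      match_scalars <;> ring

end basic

section adf
variable {F H : A} {adF : A → A}

lemma adF_add (hadF : ∀ Z : A, adF Z = F * Z - Z * F) (x y : A) :
    adF (x + y) = adF x + adF y := by simp only [hadF]; noncomm_ring

lemma adF_smul (hadF : ∀ Z : A, adF Z = F * Z - Z * F) (c : ℚ) (x : A) :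
    adF (c • x) = c • adF x := by
  simp only [hadF, mul_smul_comm, smul_mul_assoc, smul_sub]

lemma adF_zero (hadF : ∀ Z : A, adF Z = F * Z - Z * F) : adF 0 = 0 := by
  simp [hadF]

lemma iter_adF_add (hadF : ∀ Z : A, adF Z = F * Z - Z * F) (s : ℕ) (x y : A) :
    adF^[s] (x + y) = adF^[s] x + adF^[s] y := by
  induction s generalizing x y with
  | zero => simp
  | succ n ih => simp only [Function.iterate_succ_apply', ih, adF_add hadF]

lemma iter_adF_smul (hadF : ∀ Z : A, adF Z = F * Z - Z * F) (s : ℕ) (c : ℚ) (x : A) :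
    adF^[s] (c • x) = c • adF^[s] x := by
  induction s generalizing x with
  | zero => simp
  | succ n ih => simp only [Function.iterate_succ_apply', ih, adF_smul hadF]

lemma iter_adF_zero (hadF : ∀ Z : A, adF Z = F * Z - Z * F) (s : ℕ) :
    adF^[s] (0 : A) = 0 := by
  induction s with
  | zero => simp
  | succ n ih => simp only [Function.iterate_succ_apply', ih, adF_zero hadF]

lemma adF_Fmul (hadF : ∀ Z : A, adF Z = F * Z - Z * F) (x : A) :
    adF (F * x) = F * adF x := by simp only [hadF]; noncomm_ring

lemma adF_mulF (hadF : ∀ Z : A, adF Z = F * Z - Z * F) (x : A) :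
    adF (x * F) = adF x * F := by simp only [hadF]; noncomm_ring

lemma adF_Hmul (hadF : ∀ Z : A, adF Z = F * Z - Z * F)
    (hHF : H * F - F * H = -(2 * F)) (x : A) :
    adF (H * x) = H * adF x + (2:ℚ) • (F * x) := by
  have h : F * H = H * F - (H * F - F * H) := by noncomm_ring
  rw [hHF, sub_neg_eq_add] at h
  simp only [hadF, qtwo_smul]
  calc F * (H * x) - H * x * F = (F * H) * x - H * x * F := by noncomm_ring
    _ = (H * F + 2 * F) * x - H * x * F := by rw [h]
    _ = H * (F * x - x * F) + 2 * (F * x) := by noncomm_ring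

lemma adF_mulH (hadF : ∀ Z : A, adF Z = F * Z - Z * F)
    (hHF : H * F - F * H = -(2 * F)) (x : A) :
    adF (x * H) = adF x * H + (2:ℚ) • (x * F) := by
  have h : F * H = H * F - (H * F - F * H) := by noncomm_ring
  rw [hHF, sub_neg_eq_add] at h
  simp only [hadF, qtwo_smul]
  calc F * (x * H) - x * H * F = F * x * H - x * (H * F) := by noncomm_ring
    _ = F * x * H - x * (F * H - 2 * F) := by rw [h]; noncomm_ring
    _ = (F * x - x * F) * H + 2 * (x * F) := by noncomm_ring

lemma iter_adF_Hmul (hadF : ∀ Z : A, adF Z = F * Z - Z * F)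
    (hHF : H * F - F * H = -(2 * F)) (s : ℕ) (x : A) :
    adF^[s+1] (H * x)
      = H * adF^[s+1] x + (2 * (s:ℚ) + 2) • (F * adF^[s] x) := by
  induction s with
  | zero => simpa using adF_Hmul hadF hHF x
  | succ n ih =>
      conv_lhs => rw [Function.iterate_succ_apply', ih]
      rw [adF_add hadF, adF_smul hadF, adF_Hmul hadF hHF, adF_Fmul hadF,
        ← Function.iterate_succ_apply' adF (n+1) x, ← Function.iterate_succ_apply' adF n x]
      push_cast; match_scalars <;> ring

lemma iter_adF_mulH (hadF : ∀ Z : A, adF Z = F * Z - Z * F)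
    (hHF : H * F - F * H = -(2 * F)) (s : ℕ) (x : A) :
    adF^[s+1] (x * H)
      = adF^[s+1] x * H + (2 * (s:ℚ) + 2) • (adF^[s] x * F) := by
  induction s with
  | zero => simpa using adF_mulH hadF hHF x
  | succ n ih =>
      conv_lhs => rw [Function.iterate_succ_apply', ih]
      rw [adF_add hadF, adF_smul hadF, adF_mulH hadF hHF, adF_mulF hadF,
        ← Function.iterate_succ_apply' adF (n+1) x, ← Function.iterate_succ_apply' adF n x]
      push_cast; match_scalars <;> ring

end adf

section hinv
variable {F H : A} {Hinv : ℤ → A}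

lemma Qp_zero : Qp Hinv 0 = (1:A) := by simp [Qp]

lemma Qp_succ (s : ℕ) : Qp Hinv (s+1) = Qp Hinv s * Hinv (s : ℤ) := by
  rw [Qp, List.ofFn_succ']
  simp [Qp]

lemma Hinv_H_comm (hHinv : ∀ k : ℤ, (H - (k : A)) * Hinv k = 1 ∧ Hinv k * (H - (k : A)) = 1)
    (k : ℤ) : Hinv k * H = H * Hinv k := by
  have h1 := (hHinv k).1
  have h2 := (hHinv k).2
  have e1 : H * Hinv k = 1 + (k:A) * Hinv k := by
    calc H * Hinv k = (H - (k:A)) * Hinv k + (k:A) * Hinv k := by noncomm_ring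
      _ = 1 + (k:A) * Hinv k := by rw [h1]
  have e2 : Hinv k * H = 1 + (k:A) * Hinv k := by
    calc Hinv k * H = Hinv k * (H - (k:A)) + Hinv k * (k:A) := by noncomm_ring
      _ = 1 + (k:A) * Hinv k := by rw [h2, (Int.cast_commute k (Hinv k)).eq]
  rw [e1, e2]

lemma Qp_Hmul (hHinv : ∀ k : ℤ, (H - (k : A)) * Hinv k = 1 ∧ Hinv k * (H - (k : A)) = 1)
    (s : ℕ) (x : A) : Qp Hinv s * (H * x) = H * (Qp Hinv s * x) := by
  induction s generalizing x with
  | zero => simp [Qp_zero]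
  | succ n ih =>
      rw [Qp_succ, mul_assoc, mul_assoc, ← mul_assoc (Hinv (n:ℤ)), Hinv_H_comm hHinv,
        mul_assoc, ih]

lemma Hinv_F (hHF : H * F - F * H = -(2 * F))
    (hHinv : ∀ k : ℤ, (H - (k : A)) * Hinv k = 1 ∧ Hinv k * (H - (k : A)) = 1)
    (k : ℤ) : Hinv k * F = F * Hinv (k+2) := by
  have hFH : F * H = H * F + 2 * F := by
    have h : F * H = H * F - (H * F - F * H) := by noncomm_ring
    rw [hHF, sub_neg_eq_add] at h; exact h
  have key : F * (H - ((k+2:ℤ) : A)) = (H - (k:A)) * F := by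
    push_cast
    calc F * (H - ((k:A) + 2)) = F * H - (k:A) * F - 2 * F := by
          rw [(Int.cast_commute k F).eq]; noncomm_ring
      _ = H * F - (k:A) * F := by rw [hFH]; noncomm_ring
      _ = (H - (k:A)) * F := by noncomm_ring
  calc Hinv k * F
      = Hinv k * (F * ((H - ((k+2:ℤ):A)) * Hinv (k+2))) := by rw [(hHinv (k+2)).1, mul_one]
    _ = (Hinv k * (H - (k:A))) * (F * Hinv (k+2)) := by
          rw [show F * ((H - ((k+2:ℤ):A)) * Hinv (k+2)) = (F * (H - ((k+2:ℤ):A))) * Hinv (k+2)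
            from by rw [mul_assoc], key]
          noncomm_ring
    _ = F * Hinv (k+2) := by rw [(hHinv k).2, one_mul]

lemma Qp_Fmul (hHF : H * F - F * H = -(2 * F))
    (hHinv : ∀ k : ℤ, (H - (k : A)) * Hinv k = 1 ∧ Hinv k * (H - (k : A)) = 1)
    (s : ℕ) : ∃ G : A, ∀ x : A, Qp Hinv s * (F * x) = F * (G * x) := by
  induction s with
  | zero => exact ⟨1, by simp [Qp_zero]⟩
  | succ n ih =>
      obtain ⟨G, hG⟩ := ih
      refine ⟨G * Hinv ((n:ℤ)+2), fun x => ?_⟩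
      rw [Qp_succ, mul_assoc, ← mul_assoc (Hinv (n:ℤ)), Hinv_F hHF hHinv, mul_assoc,
        hG (Hinv ((n:ℤ)+2) * x), mul_assoc]

lemma Qp_cancel (hHinv : ∀ k : ℤ, (H - (k : A)) * Hinv k = 1 ∧ Hinv k * (H - (k : A)) = 1)
    (s : ℕ) (x : A) : Qp Hinv (s+1) * ((H - (s:A)) * x) = Qp Hinv s * x := by
  have h2 := (hHinv (s:ℤ)).2
  rw [Qp_succ, mul_assoc, ← mul_assoc (Hinv (s:ℤ))]
  norm_cast at h2 ⊢
  rw [h2, one_mul]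

end hinv

section sums
variable {F H : A}

lemma sum_FmodEq {ι : Type*} (F : A) (t : Finset ι) (f g : ι → A)
    (h : ∀ i ∈ t, ∃ a, f i = g i + F * a) :
    ∃ a, ∑ i ∈ t, f i = ∑ i ∈ t, g i + F * a := by
  choose! a ha using h
  refine ⟨∑ i ∈ t, a i, ?_⟩
  rw [Finset.mul_sum, ← Finset.sum_add_distrib]
  exact Finset.sum_congr rfl ha

lemma fact_ne (s : ℕ) : ((s.factorial : ℚ)) ≠ 0 :=
  Nat.cast_ne_zero.mpr s.factorial_ne_zero

/-- key summation identity, left version -/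
lemma key_sum (H : A) (u : ℕ → A) (N : ℕ) (hu : u (N+1) = 0) :
    (∑ s ∈ Finset.range (N+1),
       ((((s+1).factorial:ℚ))⁻¹ • (H * u (s+1))
        - (2*((s:ℚ)+1) * (((s+1).factorial:ℚ))⁻¹) • u (s+1)
        + (2*((s:ℚ)+1)*((s:ℚ)+1) * (((s+1).factorial:ℚ))⁻¹) • u s))
      + H * u 0
    = (H + 2) * ∑ s ∈ Finset.range (N+1), ((s.factorial:ℚ))⁻¹ • u s := by
  have w : ℕ → ℚ := fun s => 2*(s:ℚ) * ((s.factorial:ℚ))⁻¹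
  have split : ∀ s : ℕ,
      ((((s+1).factorial:ℚ))⁻¹ • (H * u (s+1))
        - (2*((s:ℚ)+1) * (((s+1).factorial:ℚ))⁻¹) • u (s+1)
        + (2*((s:ℚ)+1)*((s:ℚ)+1) * (((s+1).factorial:ℚ))⁻¹) • u s)
      = H * ((((s+1).factorial:ℚ))⁻¹ • u (s+1))
        + ((2 * ((s.factorial:ℚ))⁻¹) • u s
           + ((2*(s:ℚ) * ((s.factorial:ℚ))⁻¹) • u s
              - (2*(((s+1:ℕ)):ℚ) * (((s+1).factorial:ℚ))⁻¹) • u (s+1))) := by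
    intro s
    rw [mul_smul_comm]
    have e1 : (2*(((s+1:ℕ)):ℚ) * (((s+1).factorial:ℚ))⁻¹) = 2*((s:ℚ)+1) * (((s+1).factorial:ℚ))⁻¹ := by
      push_cast; ring
    have e2 : (2*((s:ℚ)+1)*((s:ℚ)+1) * (((s+1).factorial:ℚ))⁻¹)
        = 2 * ((s.factorial:ℚ))⁻¹ + 2*(s:ℚ) * ((s.factorial:ℚ))⁻¹ := by
      rw [Nat.factorial_succ]
      push_cast
      field_simp
      ring
    rw [e1, e2, add_smul]
    abel
  rw [Finset.sum_congr rfl (fun s _ => split s), Finset.sum_add_distrib, Finset.sum_add_distrib,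
    Finset.sum_range_sub' (fun s => (2*(s:ℚ) * ((s.factorial:ℚ))⁻¹) • u s) (N+1)]
  simp only [Nat.cast_zero, hu, smul_zero, mul_zero, zero_mul, zero_smul, sub_zero]
  have hfirst : (∑ s ∈ Finset.range (N+1), H * ((((s+1).factorial:ℚ))⁻¹ • u (s+1))) + H * u 0
      = H * ∑ s ∈ Finset.range (N+1), ((s.factorial:ℚ))⁻¹ • u s := by
    rw [← Finset.mul_sum, ← mul_add]
    congr 1
    have : (∑ s ∈ Finset.range (N+1), (((s+1).factorial:ℚ))⁻¹ • u (s+1)) + u 0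
        = ∑ s ∈ Finset.range (N+2), ((s.factorial:ℚ))⁻¹ • u s := by
      rw [Finset.sum_range_succ' (fun s => ((s.factorial:ℚ))⁻¹ • u s) (N+1)]
      simp
    rw [this, Finset.sum_range_succ, hu]
    simp
  have hsecond : (∑ s ∈ Finset.range (N+1), (2 * ((s.factorial:ℚ))⁻¹) • u s)
      = 2 * ∑ s ∈ Finset.range (N+1), ((s.factorial:ℚ))⁻¹ • u s := by
    rw [Finset.mul_sum]
    refine Finset.sum_congr rfl fun s _ => ?_
    rw [mul_comm (2:ℚ), mul_smul, qtwo_smul, mul_smul_comm]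
  calc _ = ((∑ s ∈ Finset.range (N+1), H * ((((s+1).factorial:ℚ))⁻¹ • u (s+1))) + H * u 0)
        + ∑ s ∈ Finset.range (N+1), (2 * ((s.factorial:ℚ))⁻¹) • u s := by abel
    _ = _ := by rw [hfirst, hsecond, add_mul]

/-- key summation identity, right version -/
lemma key_sum_right (H : A) (u : ℕ → A) (N : ℕ) (hu : u (N+1) = 0) :
    (∑ s ∈ Finset.range (N+1),
       ((((s+1).factorial:ℚ))⁻¹ • (u (s+1) * H)
        - (2*((s:ℚ)+1) * (((s+1).factorial:ℚ))⁻¹) • u (s+1)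
        + (2*((s:ℚ)+1)*((s:ℚ)+1) * (((s+1).factorial:ℚ))⁻¹) • u s))
      + u 0 * H
    = (∑ s ∈ Finset.range (N+1), ((s.factorial:ℚ))⁻¹ • u s) * (H + 2) := by
  have split : ∀ s : ℕ,
      ((((s+1).factorial:ℚ))⁻¹ • (u (s+1) * H)
        - (2*((s:ℚ)+1) * (((s+1).factorial:ℚ))⁻¹) • u (s+1)
        + (2*((s:ℚ)+1)*((s:ℚ)+1) * (((s+1).factorial:ℚ))⁻¹) • u s)
      = ((((s+1).factorial:ℚ))⁻¹ • u (s+1)) * H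
        + ((2 * ((s.factorial:ℚ))⁻¹) • u s
           + ((2*(s:ℚ) * ((s.factorial:ℚ))⁻¹) • u s
              - (2*(((s+1:ℕ)):ℚ) * (((s+1).factorial:ℚ))⁻¹) • u (s+1))) := by
    intro s
    rw [smul_mul_assoc]
    have e1 : (2*(((s+1:ℕ)):ℚ) * (((s+1).factorial:ℚ))⁻¹) = 2*((s:ℚ)+1) * (((s+1).factorial:ℚ))⁻¹ := by
      push_cast; ring
    have e2 : (2*((s:ℚ)+1)*((s:ℚ)+1) * (((s+1).factorial:ℚ))⁻¹)
        = 2 * ((s.factorial:ℚ))⁻¹ + 2*(s:ℚ) * ((s.factorial:ℚ))⁻¹ := by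
      rw [Nat.factorial_succ]
      push_cast
      field_simp
      ring
    rw [e1, e2, add_smul]
    abel
  rw [Finset.sum_congr rfl (fun s _ => split s), Finset.sum_add_distrib, Finset.sum_add_distrib,
    Finset.sum_range_sub' (fun s => (2*(s:ℚ) * ((s.factorial:ℚ))⁻¹) • u s) (N+1)]
  simp only [Nat.cast_zero, hu, smul_zero, mul_zero, zero_mul, zero_smul, sub_zero]
  have hfirst : (∑ s ∈ Finset.range (N+1), ((((s+1).factorial:ℚ))⁻¹ • u (s+1)) * H) + u 0 * H
      = (∑ s ∈ Finset.range (N+1), ((s.factorial:ℚ))⁻¹ • u s) * H := by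
    rw [← Finset.sum_mul, ← add_mul]
    congr 1
    have : (∑ s ∈ Finset.range (N+1), (((s+1).factorial:ℚ))⁻¹ • u (s+1)) + u 0
        = ∑ s ∈ Finset.range (N+2), ((s.factorial:ℚ))⁻¹ • u s := by
      rw [Finset.sum_range_succ' (fun s => ((s.factorial:ℚ))⁻¹ • u s) (N+1)]
      simp
    rw [this, Finset.sum_range_succ, hu]
    simp
  have hsecond : (∑ s ∈ Finset.range (N+1), (2 * ((s.factorial:ℚ))⁻¹) • u s)
      = (∑ s ∈ Finset.range (N+1), ((s.factorial:ℚ))⁻¹ • u s) * 2 := by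
    rw [Finset.sum_mul]
    refine Finset.sum_congr rfl fun s _ => ?_
    rw [mul_comm (2:ℚ), mul_smul, qtwo_smul,
      show (2:A) * u s = u s * 2 from by rw [two_mul, mul_two], smul_mul_assoc]
  calc _ = ((∑ s ∈ Finset.range (N+1), ((((s+1).factorial:ℚ))⁻¹ • u (s+1)) * H) + u 0 * H)
        + ∑ s ∈ Finset.range (N+1), (2 * ((s.factorial:ℚ))⁻¹) • u s := by abel
    _ = _ := by rw [hfirst, hsecond, mul_add]

end sums

section core
variable {E F H : A} {Hinv : ℤ → A} {adF : A → A}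

/-- Core rank-one identity, left version. -/
lemma core_left
    (hHE : H * E - E * H = 2 * E)
    (hHF : H * F - F * H = -(2 * F))
    (hEF : E * F - F * E = H)
    (hHinv : ∀ k : ℤ, (H - (k : A)) * Hinv k = 1 ∧ Hinv k * (H - (k : A)) = 1)
    (hadF : ∀ Z : A, adF Z = F * Z - Z * F)
    (Z : A) (N : ℕ) (hZ : ∀ s : ℕ, N < s → adF^[s] Z = 0) :
    ∃ a : A, xiE E Hinv adF (N+1) (H * Z) = (H + 2) * xiE E Hinv adF N Z + F * a := by
  have hstep : ∀ s ∈ Finset.range (N+1), ∃ a : A,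
      ((((s+1).factorial : ℚ))⁻¹) • (Qp Hinv (s+1) * (E ^ (s+1) * adF^[s+1] (H * Z)))
      = ((((s+1).factorial:ℚ))⁻¹ • (H * (Qp Hinv (s+1) * (E ^ (s+1) * adF^[s+1] Z)))
        - (2*((s:ℚ)+1) * (((s+1).factorial:ℚ))⁻¹) • (Qp Hinv (s+1) * (E ^ (s+1) * adF^[s+1] Z))
        + (2*((s:ℚ)+1)*((s:ℚ)+1) * (((s+1).factorial:ℚ))⁻¹) • (Qp Hinv s * (E ^ s * adF^[s] Z)))
        + F * a := by
    intro s _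
    obtain ⟨G, hG⟩ := Qp_Fmul hHF hHinv (s+1)
    refine ⟨(2*((s:ℚ)+1) * (((s+1).factorial:ℚ))⁻¹) • (G * (E ^ (s+1) * adF^[s] Z)), ?_⟩
    rw [iter_adF_Hmul hadF hHF s Z]
    simp only [mul_add, mul_smul_comm, smul_add, smul_smul]
    rw [pow_H hHE (s+1) (adF^[s+1] Z), pow_F hHE hEF s (adF^[s] Z)]
    simp only [mul_sub, mul_add, mul_smul_comm, smul_sub, smul_add, smul_smul]
    rw [Qp_Hmul hHinv (s+1), Qp_cancel hHinv s, hG (E ^ (s+1) * adF^[s] Z)]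
    push_cast
    match_scalars <;> ring
  obtain ⟨a, ha⟩ := sum_FmodEq F (Finset.range (N+1)) _ _ hstep
  refine ⟨a, ?_⟩
  rw [xiE, Finset.sum_range_succ'
    (fun s => ((s.factorial : ℚ))⁻¹ • (Qp Hinv s * (E ^ s * adF^[s] (H * Z)))) (N+1), ha]
  have hzero : ((Nat.factorial 0 : ℚ))⁻¹ • (Qp Hinv 0 * (E ^ 0 * adF^[0] (H * Z)))
      = H * (Qp Hinv 0 * (E ^ 0 * adF^[0] Z)) := by
    simp [Qp_zero]
  rw [hzero, add_right_comm]
  congr 1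
  have := key_sum H (fun t => Qp Hinv t * (E ^ t * adF^[t] Z)) N
    (by simp only [hZ (N+1) (Nat.lt_succ_self N), mul_zero])
  simpa [xiE] using this

/-- Core rank-one identity, right version. -/
lemma core_right
    (hHE : H * E - E * H = 2 * E)
    (hHF : H * F - F * H = -(2 * F))
    (hEF : E * F - F * E = H)
    (hHinv : ∀ k : ℤ, (H - (k : A)) * Hinv k = 1 ∧ Hinv k * (H - (k : A)) = 1)
    (hadF : ∀ Z : A, adF Z = F * Z - Z * F)
    (Z : A) (N : ℕ) (hZ : ∀ s : ℕ, N < s → adF^[s] Z = 0) :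
    ∃ a : A, xiE E Hinv adF (N+1) (Z * H) = xiE E Hinv adF N Z * (H + 2) + F * a := by
  have hstep : ∀ s ∈ Finset.range (N+1), ∃ a : A,
      ((((s+1).factorial : ℚ))⁻¹) • (Qp Hinv (s+1) * (E ^ (s+1) * adF^[s+1] (Z * H)))
      = ((((s+1).factorial:ℚ))⁻¹ • ((Qp Hinv (s+1) * (E ^ (s+1) * adF^[s+1] Z)) * H)
        - (2*((s:ℚ)+1) * (((s+1).factorial:ℚ))⁻¹) • (Qp Hinv (s+1) * (E ^ (s+1) * adF^[s+1] Z))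
        + (2*((s:ℚ)+1)*((s:ℚ)+1) * (((s+1).factorial:ℚ))⁻¹) • (Qp Hinv s * (E ^ s * adF^[s] Z)))
        + F * a := by
    intro s _
    obtain ⟨G, hG⟩ := Qp_Fmul hHF hHinv (s+1)
    refine ⟨(2*((s:ℚ)+1) * (((s+1).factorial:ℚ))⁻¹) • (G * (E ^ (s+1) * adF^[s] Z)), ?_⟩
    rw [iter_adF_mulH hadF hHF s Z]
    have hWF : adF^[s] Z * F = F * adF^[s] Z - adF^[s+1] Z := by
      rw [Function.iterate_succ_apply' adF s Z, hadF (adF^[s] Z)]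
      noncomm_ring
    rw [hWF]
    simp only [mul_add, mul_sub, mul_smul_comm, smul_add, smul_sub, smul_smul]
    rw [pow_F hHE hEF s (adF^[s] Z)]
    simp only [mul_add, mul_smul_comm, smul_add, smul_smul]
    rw [Qp_cancel hHinv s, hG (E ^ (s+1) * adF^[s] Z)]
    rw [show Qp Hinv (s+1) * (E ^ (s+1) * (adF^[s+1] Z * H))
        = (Qp Hinv (s+1) * (E ^ (s+1) * adF^[s+1] Z)) * H from by noncomm_ring]
    push_cast
    match_scalars <;> ring
  obtain ⟨a, ha⟩ := sum_FmodEq F (Finset.range (N+1)) _ _ hstep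
  refine ⟨a, ?_⟩
  rw [xiE, Finset.sum_range_succ'
    (fun s => ((s.factorial : ℚ))⁻¹ • (Qp Hinv s * (E ^ s * adF^[s] (Z * H)))) (N+1), ha]
  have hzero : ((Nat.factorial 0 : ℚ))⁻¹ • (Qp Hinv 0 * (E ^ 0 * adF^[0] (Z * H)))
      = (Qp Hinv 0 * (E ^ 0 * adF^[0] Z)) * H := by
    simp [Qp_zero]
  rw [hzero, add_right_comm]
  congr 1
  have := key_sum_right H (fun t => Qp Hinv t * (E ^ t * adF^[t] Z)) N
    (by simp only [hZ (N+1) (Nat.lt_succ_self N), mul_zero])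
  simpa [xiE] using this

end core

section assemble
variable {E F H : A} {Hinv : ℤ → A} {adF : A → A}

lemma xiE_stable {Z : A} {N K : ℕ} (hNK : N ≤ K)
    (hZ : ∀ s : ℕ, N < s → adF^[s] Z = 0) :
    xiE E Hinv adF K Z = xiE E Hinv adF N Z := by
  rw [xiE, xiE]
  refine (Finset.sum_subset ?_ ?_).symm
  · intro x hx; simp only [Finset.mem_range] at *; omega
  · intro x hx hnx
    simp only [Finset.mem_range] at hx hnx
    rw [hZ x (by omega)]
    simp

lemma xiE_zero (hadF : ∀ Z : A, adF Z = F * Z - Z * F) :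
    ∀ M, xiE E Hinv adF M (0:A) = 0 := by
  intro M
  rw [xiE]
  refine Finset.sum_eq_zero fun s _ => ?_
  rw [iter_adF_zero hadF]
  simp

lemma xiE_add (hadF : ∀ Z : A, adF Z = F * Z - Z * F) (M : ℕ) (x y : A) :
    xiE E Hinv adF M (x + y) = xiE E Hinv adF M x + xiE E Hinv adF M y := by
  rw [xiE, xiE, xiE, ← Finset.sum_add_distrib]
  refine Finset.sum_congr rfl fun s _ => ?_
  rw [iter_adF_add hadF, mul_add, mul_add, smul_add]

lemma xiE_smul (hadF : ∀ Z : A, adF Z = F * Z - Z * F) (M : ℕ) (c : ℚ) (x : A) :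
    xiE E Hinv adF M (c • x) = c • xiE E Hinv adF M x := by
  rw [xiE, xiE, Finset.smul_sum]
  refine Finset.sum_congr rfl fun s _ => ?_
  rw [iter_adF_smul hadF, mul_smul_comm, mul_smul_comm, smul_smul, smul_smul, mul_comm]

lemma xiE_sum (hadF : ∀ Z : A, adF Z = F * Z - Z * F) (M : ℕ)
    {ι : Type*} (t : Finset ι) (f : ι → A) :
    xiE E Hinv adF M (∑ i ∈ t, f i) = ∑ i ∈ t, xiE E Hinv adF M (f i) := by
  classical
  induction t using Finset.induction_on with
  | empty => simpa using xiE_zero hadF M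
  | insert _ _ hni ih =>
      rw [Finset.sum_insert hni, Finset.sum_insert hni, xiE_add hadF, ih]

lemma nil_Hmul (hadF : ∀ Z : A, adF Z = F * Z - Z * F)
    (hHF : H * F - F * H = -(2 * F)) {Z : A} {N : ℕ}
    (hZ : ∀ s : ℕ, N < s → adF^[s] Z = 0) :
    ∀ s : ℕ, N + 1 < s → adF^[s] (H * Z) = 0 := by
  intro s hs
  obtain ⟨t, rfl⟩ : ∃ t, s = t + 1 := ⟨s - 1, by omega⟩
  rw [iter_adF_Hmul hadF hHF, hZ t (by omega), hZ (t+1) (by omega)]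
  simp

lemma nil_mulH (hadF : ∀ Z : A, adF Z = F * Z - Z * F)
    (hHF : H * F - F * H = -(2 * F)) {Z : A} {N : ℕ}
    (hZ : ∀ s : ℕ, N < s → adF^[s] Z = 0) :
    ∀ s : ℕ, N + 1 < s → adF^[s] (Z * H) = 0 := by
  intro s hs
  obtain ⟨t, rfl⟩ : ∃ t, s = t + 1 := ⟨s - 1, by omega⟩
  rw [iter_adF_mulH hadF hHF, hZ t (by omega), hZ (t+1) (by omega)]
  simp

lemma nil_powHmul (hadF : ∀ Z : A, adF Z = F * Z - Z * F)
    (hHF : H * F - F * H = -(2 * F)) {Z : A} {N : ℕ}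
    (hZ : ∀ s : ℕ, N < s → adF^[s] Z = 0) (n : ℕ) :
    ∀ s : ℕ, N + n < s → adF^[s] (H ^ n * Z) = 0 := by
  induction n with
  | zero => simpa using hZ
  | succ m ih =>
      have h1 : ∀ s : ℕ, (N + m) + 1 < s → adF^[s] (H * (H ^ m * Z)) = 0 :=
        nil_Hmul hadF hHF ih
      intro s hs
      rw [show H ^ (m+1) * Z = H * (H ^ m * Z) from by rw [pow_succ']; noncomm_ring]
      exact h1 s (by omega)

lemma nil_mulpowH (hadF : ∀ Z : A, adF Z = F * Z - Z * F)
    (hHF : H * F - F * H = -(2 * F)) {Z : A} {N : ℕ}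
    (hZ : ∀ s : ℕ, N < s → adF^[s] Z = 0) (n : ℕ) :
    ∀ s : ℕ, N + n < s → adF^[s] (Z * H ^ n) = 0 := by
  induction n with
  | zero => simpa using hZ
  | succ m ih =>
      have h1 : ∀ s : ℕ, (N + m) + 1 < s → adF^[s] ((Z * H ^ m) * H) = 0 :=
        nil_mulH hadF hHF ih
      intro s hs
      rw [show Z * H ^ (m+1) = (Z * H ^ m) * H from by rw [pow_succ]; noncomm_ring]
      exact h1 s (by omega)

lemma mono_left
    (hHE : H * E - E * H = 2 * E)
    (hHF : H * F - F * H = -(2 * F))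
    (hEF : E * F - F * E = H)
    (hHinv : ∀ k : ℤ, (H - (k : A)) * Hinv k = 1 ∧ Hinv k * (H - (k : A)) = 1)
    (hadF : ∀ Z : A, adF Z = F * Z - Z * F)
    (Z : A) (N : ℕ) (hZ : ∀ s : ℕ, N < s → adF^[s] Z = 0) (n : ℕ) :
    ∃ a : A, xiE E Hinv adF (N+n) (H ^ n * Z)
      = (H + 2) ^ n * xiE E Hinv adF N Z + F * a := by
  induction n with
  | zero => exact ⟨0, by simp⟩
  | succ m ih =>
      obtain ⟨b, hb⟩ := ih
      obtain ⟨c, hc⟩ := core_left hHE hHF hEF hHinv hadF (H ^ m * Z) (N + m)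
        (nil_powHmul hadF hHF hZ m)
      refine ⟨H * b + c, ?_⟩
      have hFH : F * H = H * F + 2 * F := by
        have h : F * H = H * F - (H * F - F * H) := by noncomm_ring
        rw [hHF, sub_neg_eq_add] at h; exact h
      calc xiE E Hinv adF (N+(m+1)) (H ^ (m+1) * Z)
          = xiE E Hinv adF ((N+m)+1) (H * (H ^ m * Z)) := by
            rw [show H ^ (m+1) * Z = H * (H ^ m * Z) from by rw [pow_succ']; noncomm_ring,
              show N+(m+1) = (N+m)+1 from rfl]
        _ = (H + 2) * xiE E Hinv adF (N+m) (H ^ m * Z) + F * c := hc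
        _ = (H + 2) * ((H + 2) ^ m * xiE E Hinv adF N Z + F * b) + F * c := by rw [hb]
        _ = (H + 2) ^ (m+1) * xiE E Hinv adF N Z + ((H + 2) * (F * b) + F * c) := by
            rw [mul_add, pow_succ']
            noncomm_ring
        _ = (H + 2) ^ (m+1) * xiE E Hinv adF N Z + F * (H * b + c) := by
            rw [show (H + 2) * (F * b) = ((H+2) * F) * b from by rw [mul_assoc],
              show (H + 2) * F = F * H from by rw [hFH]; noncomm_ring]
            rw [mul_add, mul_assoc]

lemma mono_right
    (hHE : H * E - E * H = 2 * E)
    (hHF : H * F - F * H = -(2 * F))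
    (hEF : E * F - F * E = H)
    (hHinv : ∀ k : ℤ, (H - (k : A)) * Hinv k = 1 ∧ Hinv k * (H - (k : A)) = 1)
    (hadF : ∀ Z : A, adF Z = F * Z - Z * F)
    (Z : A) (N : ℕ) (hZ : ∀ s : ℕ, N < s → adF^[s] Z = 0) (n : ℕ) :
    ∃ a : A, xiE E Hinv adF (N+n) (Z * H ^ n)
      = xiE E Hinv adF N Z * (H + 2) ^ n + F * a := by
  induction n with
  | zero => exact ⟨0, by simp⟩
  | succ m ih =>
      obtain ⟨b, hb⟩ := ih
      obtain ⟨c, hc⟩ := core_right hHE hHF hEF hHinv hadF (Z * H ^ m) (N + m)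
        (nil_mulpowH hadF hHF hZ m)
      refine ⟨b * (H + 2) + c, ?_⟩
      calc xiE E Hinv adF (N+(m+1)) (Z * H ^ (m+1))
          = xiE E Hinv adF ((N+m)+1) ((Z * H ^ m) * H) := by
            rw [show Z * H ^ (m+1) = (Z * H ^ m) * H from by rw [pow_succ]; noncomm_ring,
              show N+(m+1) = (N+m)+1 from rfl]
        _ = xiE E Hinv adF (N+m) (Z * H ^ m) * (H + 2) + F * c := hc
        _ = (xiE E Hinv adF N Z * (H + 2) ^ m + F * b) * (H + 2) + F * c := by rw [hb]
        _ = xiE E Hinv adF N Z * (H + 2) ^ (m+1) + F * (b * (H + 2) + c) := by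
            rw [pow_succ]
            noncomm_ring

end assemble

end ZhAux

/-- rank-one Zhelobenko identities: let `A` be an associative
algebra containing `sl_2`-triple `E, F, H`, localized so that each `H - k`
(`k ∈ ℤ`) has a two-sided inverse `Hinv k`.  For `Y ∈ A` with
`(ad F)^s Y = 0` for `s > M`, set
`ξ(Y) = Σ_{s=0}^{M} (s!)⁻¹ (H(H-1)⋯(H-s+1))⁻¹ E^s (ad F)^s(Y)`.
Then for any polynomial `X = p(H)` in the Cartan part,
`ξ(XY) ∈ p(H+2) ξ(Y) + J̄` and `ξ(YX) ∈ ξ(Y) p(H+2) + J̄`,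
where `J̄ = F·A` is the right ideal generated by `F`. -/
theorem zhelobenko_extremal_identities
    {A : Type*} [Ring A] [Algebra ℚ A]
    (E F H : A)
    (hHE : H * E - E * H = 2 * E)
    (hHF : H * F - F * H = -(2 * F))
    (hEF : E * F - F * E = H)
    (Hinv : ℤ → A)
    (hHinv : ∀ k : ℤ, (H - (k : A)) * Hinv k = 1 ∧ Hinv k * (H - (k : A)) = 1)
    (adF : A → A) (hadF : ∀ Z : A, adF Z = F * Z - Z * F)
    (xi : A → ℕ → A)
    (hxi : ∀ (Y : A) (M : ℕ),
      xi Y M = ∑ s ∈ Finset.range (M + 1),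
        (((s.factorial : ℚ))⁻¹) •
          ((List.ofFn fun r : Fin s => Hinv ((r : ℕ) : ℤ)).prod * E ^ s * adF^[s] Y))
    (p : Polynomial ℚ) (Y : A) (M : ℕ)
    (hnil : ∀ s : ℕ, M < s →
      adF^[s] Y = 0 ∧
      adF^[s] (Polynomial.aeval H p * Y) = 0 ∧
      adF^[s] (Y * Polynomial.aeval H p) = 0) :
    ∃ a b : A,
      xi (Polynomial.aeval H p * Y) M
        = Polynomial.aeval (H + 2) p * xi Y M + F * a ∧
      xi (Y * Polynomial.aeval H p) M
        = xi Y M * Polynomial.aeval (H + 2) p + F * b := by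
  classical
  set D := p.natDegree with hD
  have hY : ∀ s : ℕ, M < s → adF^[s] Y = 0 := fun s hs => (hnil s hs).1
  have hxiE : ∀ (W : A) (K : ℕ), xi W K = ZhAux.xiE E Hinv adF K W := by
    intro W K
    rw [hxi, ZhAux.xiE]
    exact Finset.sum_congr rfl fun s _ => by rw [ZhAux.Qp, mul_assoc]
  -- left identity
  have hL : ∃ a : A, xi (Polynomial.aeval H p * Y) M
      = Polynomial.aeval (H + 2) p * xi Y M + F * a := by
    have e0 : ZhAux.xiE E Hinv adF M (Polynomial.aeval H p * Y)
        = ZhAux.xiE E Hinv adF (M+D) (Polynomial.aeval H p * Y) :=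
      (ZhAux.xiE_stable (Nat.le_add_right _ _) (fun s hs => (hnil s hs).2.1)).symm
    have hexp : Polynomial.aeval H p * Y
        = ∑ i ∈ Finset.range (D+1), p.coeff i • (H ^ i * Y) := by
      rw [Polynomial.aeval_eq_sum_range, Finset.sum_mul]
      exact Finset.sum_congr rfl fun i _ => smul_mul_assoc _ _ _
    have hsum : ZhAux.xiE E Hinv adF (M+D) (Polynomial.aeval H p * Y)
        = ∑ i ∈ Finset.range (D+1), p.coeff i • ZhAux.xiE E Hinv adF (M+D) (H ^ i * Y) := by
      rw [hexp, ZhAux.xiE_sum hadF]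
      exact Finset.sum_congr rfl fun i _ => ZhAux.xiE_smul hadF _ _ _
    have hterm : ∀ i ∈ Finset.range (D+1), ∃ a : A,
        p.coeff i • ZhAux.xiE E Hinv adF (M+D) (H ^ i * Y)
        = p.coeff i • ((H + 2) ^ i * ZhAux.xiE E Hinv adF M Y) + F * a := by
      intro i hi
      simp only [Finset.mem_range] at hi
      have hstab : ZhAux.xiE E Hinv adF (M+D) (H ^ i * Y)
          = ZhAux.xiE E Hinv adF (M+i) (H ^ i * Y) :=
        ZhAux.xiE_stable (by omega) (ZhAux.nil_powHmul hadF hHF hY i)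
      obtain ⟨a, ha⟩ := ZhAux.mono_left hHE hHF hEF hHinv hadF Y M hY i
      exact ⟨p.coeff i • a, by rw [hstab, ha, smul_add, mul_smul_comm]⟩
    obtain ⟨a, ha⟩ := ZhAux.sum_FmodEq F _ _ _ hterm
    have hmul : ∑ i ∈ Finset.range (D+1),
        p.coeff i • ((H + 2) ^ i * ZhAux.xiE E Hinv adF M Y)
        = Polynomial.aeval (H + 2) p * ZhAux.xiE E Hinv adF M Y := by
      rw [Polynomial.aeval_eq_sum_range, Finset.sum_mul]
      exact Finset.sum_congr rfl fun i _ => (smul_mul_assoc _ _ _).symm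
    refine ⟨a, ?_⟩
    rw [hxiE _ M, e0, hsum, ha, hmul, ← hxiE Y M]
  -- right identity
  have hR : ∃ b : A, xi (Y * Polynomial.aeval H p) M
      = xi Y M * Polynomial.aeval (H + 2) p + F * b := by
    have e0 : ZhAux.xiE E Hinv adF M (Y * Polynomial.aeval H p)
        = ZhAux.xiE E Hinv adF (M+D) (Y * Polynomial.aeval H p) :=
      (ZhAux.xiE_stable (Nat.le_add_right _ _) (fun s hs => (hnil s hs).2.2)).symm
    have hexp : Y * Polynomial.aeval H p
        = ∑ i ∈ Finset.range (D+1), p.coeff i • (Y * H ^ i) := by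
      rw [Polynomial.aeval_eq_sum_range, Finset.mul_sum]
      exact Finset.sum_congr rfl fun i _ => mul_smul_comm _ _ _
    have hsum : ZhAux.xiE E Hinv adF (M+D) (Y * Polynomial.aeval H p)
        = ∑ i ∈ Finset.range (D+1), p.coeff i • ZhAux.xiE E Hinv adF (M+D) (Y * H ^ i) := by
      rw [hexp, ZhAux.xiE_sum hadF]
      exact Finset.sum_congr rfl fun i _ => ZhAux.xiE_smul hadF _ _ _
    have hterm : ∀ i ∈ Finset.range (D+1), ∃ a : A,
        p.coeff i • ZhAux.xiE E Hinv adF (M+D) (Y * H ^ i)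
        = p.coeff i • (ZhAux.xiE E Hinv adF M Y * (H + 2) ^ i) + F * a := by
      intro i hi
      simp only [Finset.mem_range] at hi
      have hstab : ZhAux.xiE E Hinv adF (M+D) (Y * H ^ i)
          = ZhAux.xiE E Hinv adF (M+i) (Y * H ^ i) :=
        ZhAux.xiE_stable (by omega) (ZhAux.nil_mulpowH hadF hHF hY i)
      obtain ⟨a, ha⟩ := ZhAux.mono_right hHE hHF hEF hHinv hadF Y M hY i
      exact ⟨p.coeff i • a, by rw [hstab, ha, smul_add, mul_smul_comm]⟩
    obtain ⟨b, hb⟩ := ZhAux.sum_FmodEq F _ _ _ hterm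
    have hmul : ∑ i ∈ Finset.range (D+1),
        p.coeff i • (ZhAux.xiE E Hinv adF M Y * (H + 2) ^ i)
        = ZhAux.xiE E Hinv adF M Y * Polynomial.aeval (H + 2) p := by
      rw [Polynomial.aeval_eq_sum_range, Finset.mul_sum]
      exact Finset.sum_congr rfl fun i _ => (mul_smul_comm _ _ _).symm
    refine ⟨b, ?_⟩
    rw [hxiE _ M, e0, hsum, hb, hmul, ← hxiE Y M]
  obtain ⟨a, ha⟩ := hL
  obtain ⟨b, hb⟩ := hR
  exact ⟨a, b, ha, hb⟩
end

section
/- Let m = 2, and let λ = μ + ν with ν = (ν_1, ν_2), 0 ≤ ν_1 < ν_2 ≤ n, and μ_1 − μ_2 ∉ Z. In the quotient (modulo the relations E_{11} ↦ λ_1, E_{22} ↦ λ_2 coming from the ideal I_{σ_1∘μ} and the ideal J̄), the value of the Zhelobenko sum Σ_{s=0}^{d} d!/((d−s)! H^{(s)}) applied to the weight vector w, where d = ν_2 − ν_1 and H^{(s)} = Π_{r=1}^s (H − r + 1) with H acting on w as the scalar λ_2 − λ_1 − 2, equals ((λ_1 − λ_2 + 1)/(μ_1 − μ_2 + 1)) ·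 w. -/
lemma aux_prod (c : ℂ) : ∀ i : ℕ, ∏ r ∈ Finset.Icc 1 (i+1), (c - (r:ℂ)) =
    (c - 1) * ∏ r ∈ Finset.Icc 1 i, ((c - 1) - (r:ℂ)) := by
  intro i
  induction i with
  | zero => simp
  | succ i ih =>
    rw [Finset.prod_Icc_succ_top (by omega : 1 ≤ i + 1 + 1), ih,
        Finset.prod_Icc_succ_top (by omega : 1 ≤ i + 1)]
    push_cast
    ring

lemma key : ∀ (d : ℕ) (c : ℂ), (∀ r ∈ Finset.Icc 1 d, c - (r:ℂ) ≠ 0) → c - (d:ℂ) ≠ 0 →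
    ∑ s ∈ Finset.range (d+1),
      (d.factorial : ℂ) / (((d - s).factorial : ℂ) * ∏ r ∈ Finset.Icc 1 s, (c - (r:ℂ)))
      = c / (c - d) := by
  intro d
  induction d with
  | zero =>
    intro c _ h0
    simp only [Nat.cast_zero, sub_zero] at h0 ⊢
    simp [div_self h0]
  | succ d ih =>
    intro c h hd
    have hc1 : c - 1 ≠ 0 := by
      have := h 1 (by simp); simpa using this
    have h' : ∀ r ∈ Finset.Icc 1 d, (c - 1) - (r:ℂ) ≠ 0 := by
      intro r hr
      have := h (r+1) (by simp at hr ⊢; omega)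
      push_cast at this ⊢
      intro hz; apply this; linear_combination hz
    have hd' : (c - 1) - (d:ℂ) ≠ 0 := by
      intro hz; apply hd; push_cast; linear_combination hz
    rw [Finset.sum_range_succ']
    have hterm : ∀ i ∈ Finset.range (d+1),
        ((d+1).factorial : ℂ) / (((d + 1 - (i+1)).factorial : ℂ) *
          ∏ r ∈ Finset.Icc 1 (i+1), (c - (r:ℂ)))
        = ((d:ℂ)+1) / (c-1) *
          ((d.factorial : ℂ) / (((d - i).factorial : ℂ) * ∏ r ∈ Finset.Icc 1 i, ((c-1) - (r:ℂ)))) := by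
      intro i hi
      simp only [Finset.mem_range] at hi
      have h1 : d + 1 - (i+1) = d - i := by omega
      have hQ : (∏ r ∈ Finset.Icc 1 i, ((c-1) - (r:ℂ))) ≠ 0 := by
        apply Finset.prod_ne_zero_iff.mpr
        intro r hr; exact h' r (by simp at hr ⊢; omega)
      have hfac : ((d - i).factorial : ℂ) ≠ 0 := by
        exact_mod_cast (d-i).factorial_ne_zero
      have hfs : ((d+1).factorial : ℂ) = ((d:ℂ)+1) * (d.factorial : ℂ) := by
        rw [Nat.factorial_succ]; push_cast; ring
      rw [h1, aux_prod, hfs, div_mul_div_comm]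
      congr 1
      ring
    rw [Finset.sum_congr rfl hterm, ← Finset.mul_sum, ih (c-1) h' hd']
    have hd2 : c - ((d:ℂ)+1) ≠ 0 := by intro hz; apply hd; push_cast; linear_combination hz
    have hfac1 : (((d+1).factorial : ℕ) : ℂ) ≠ 0 := by
      exact_mod_cast (d+1).factorial_ne_zero
    have e1 : ∏ r ∈ (Finset.Icc 1 0 : Finset ℕ), (c - (r:ℂ)) = 1 := by simp
    rw [Nat.sub_zero, e1, mul_one, div_self hfac1]
    push_cast
    field_simp
    ring



/-- the rank-one scalar computation in Proposition 3.7: with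
`m = 2`, `λ = μ + ν`, `0 ≤ ν₁ < ν₂ ≤ n`, `μ₁ - μ₂ ∉ ℤ` and `d = ν₂ - ν₁`,
the Zhelobenko sum `Σ_{s=0}^{d} d!/((d-s)! H^{(s)})` applied to the weight
vector `w`, where `H^{(s)} = Π_{r=1}^{s}(H - r + 1)` and `H` acts on `w` as
the scalar `λ₂ - λ₁ - 2`, equals `((λ₁ - λ₂ + 1)/(μ₁ - μ₂ + 1)) · w`. -/
theorem zhelobenko_scalar_value
    {M : Type*} [AddCommGroup M] [Module ℂ M]
    (n ν₁ ν₂ : ℕ) (μ₁ μ₂ la₁ la₂ : ℂ)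
    (hν : ν₁ < ν₂) (hνn : ν₂ ≤ n)
    (hla₁ : la₁ = μ₁ + (ν₁ : ℂ)) (hla₂ : la₂ = μ₂ + (ν₂ : ℂ))
    (hμ : ∀ k : ℤ, μ₁ - μ₂ ≠ (k : ℂ))
    (d : ℕ) (hd : d = ν₂ - ν₁) (w : M) :
    (∑ s ∈ Finset.range (d + 1),
        (d.factorial : ℂ) /
          (((d - s).factorial : ℂ) *
            ∏ r ∈ Finset.Icc 1 s, ((la₂ - la₁ - 2) - (r : ℂ) + 1))) • w
      = ((la₁ - la₂ + 1) / (μ₁ - μ₂ + 1)) • w := by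
  set c : ℂ := (d : ℂ) - (μ₁ - μ₂) - 1 with hc
  have hcast : (ν₂ : ℂ) - (ν₁ : ℂ) = (d : ℂ) := by
    have h1 : ν₁ + d = ν₂ := by omega
    have := congrArg (Nat.cast : ℕ → ℂ) h1
    push_cast at this
    linear_combination -this
  have hu1 : μ₁ - μ₂ + 1 ≠ 0 := by
    intro hz; exact hμ (-1) (by push_cast; linear_combination hz)
  have hprod : ∀ s : ℕ, ∏ r ∈ Finset.Icc 1 s, ((la₂ - la₁ - 2) - (r : ℂ) + 1)
      = ∏ r ∈ Finset.Icc 1 s, (c - (r:ℂ)) := by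
    intro s
    refine Finset.prod_congr rfl fun r _ => ?_
    rw [hla₁, hla₂, hc]
    linear_combination hcast
  have hkey : (∑ s ∈ Finset.range (d + 1),
        (d.factorial : ℂ) /
          (((d - s).factorial : ℂ) *
            ∏ r ∈ Finset.Icc 1 s, ((la₂ - la₁ - 2) - (r : ℂ) + 1))) = c / (c - d) := by
    rw [Finset.sum_congr rfl fun s _ => by rw [hprod s]]
    apply key
    · intro r hr
      simp only [Finset.mem_Icc] at hr
      intro hz
      apply hμ ((d : ℤ) - 1 - r)
      push_cast
      linear_combination -hz
    · intro hz
      apply hμ (-1)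
      push_cast
      linear_combination -hz
  rw [hkey]
  congr 1
  rw [div_eq_div_iff (by intro hz; exact hμ (-1) (by push_cast; linear_combination -hz)) hu1,
    hla₁, hla₂, hc]
  linear_combination (-(μ₁ - μ₂ + 1)) * hcast
end
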